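/- arXiv:1111.1033 — 6 statements merged into one kernel-verified Lean document; each statement's English description precedes it below -/
import Mathlib

section
/- Let n ≥ 2 and for 1 ≤ j ≤ i ≤ n-1 let a_{ij} > 0. Define the upper-triangular unipotent matrix g = ∏_{l=1}^{n-1} ∏_{k=1}^{n-l} s_{n-k}(a_{n-k,n-k-l+1}), where s_i(t) = I_n + t E_{i,i+1}. Let x_{i,j} (for 1 ≤ i < j ≤ n) be the determinant of the i×i minor of g with rows 1,…,i and columns j-i+1,…,j. Then x_{i,i+j} = ∏_{m=1}^{j} ∏_{p=1}^{i} a_{m+p-1,p}, with the convention x_{i,i} = x_{i,0} = x_{0,j} = 1. -/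
/-- The elementary unipotent matrix `s_i(t) = Iₙ + t E_{i,i+1}` (1-based index `i`):
the off-diagonal entry `t` sits in 1-based position `(i, i+1)`. -/
def elemU (n : ℕ) (i : ℕ) (t : ℝ) : Matrix (Fin n) (Fin n) ℝ :=
  Matrix.of fun p q =>
    (if p = q then (1 : ℝ) else 0) +
    (if (p : ℕ) + 1 = i ∧ (q : ℕ) = i then t else 0)

/-- The totally positive upper unipotent matrix
`g = ∏_{l=1}^{n-1} ∏_{k=1}^{n-l} s_{n-k}(a_{n-k, n-k-l+1})`
(products taken in the stated order; here `l, k` are re-indexed from `0`). -/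
def posUnip (n : ℕ) (a : ℕ → ℕ → ℝ) : Matrix (Fin n) (Fin n) ℝ :=
  ((List.range (n - 1)).map (fun l =>
    ((List.range (n - 1 - l)).map (fun k =>
      elemU n (n - 1 - k) (a (n - 1 - k) (n - 1 - k - l)))).prod)).prod

/-- The cluster variable `x_{i,j}`: the determinant of the `i×i` minor of `g` with
rows `1,…,i` and columns `j-i+1,…,j` (1-based), with the convention
`x_{i,i} = x_{i,0} = x_{0,j} = 1` (and `1` for out-of-range indices). -/
noncomputable def clusterX (n : ℕ) (g : Matrix (Fin n) (Fin n) ℝ) (i j : ℕ) : ℝ :=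
  if h : 1 ≤ i ∧ i < j ∧ j ≤ n then
    Matrix.det (Matrix.of fun p q : Fin i =>
      g ⟨p.1, by have := p.2; omega⟩ ⟨j - i + q.1, by have := q.2; omega⟩)
  else 1



/-- Bidiagonal unipotent matrix with superdiagonal entries `a (p+1) (p+1-l)` at
0-based rows `p ≥ l`. -/
def bidiag (n l : ℕ) (a : ℕ → ℕ → ℝ) : Matrix (Fin n) (Fin n) ℝ :=
  Matrix.of fun p q =>
    (if p = q then (1 : ℝ) else 0) +
    (if (q : ℕ) = (p : ℕ) + 1 ∧ l ≤ (p : ℕ) then a ((p : ℕ) + 1) ((p : ℕ) + 1 - l) else 0)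

/-- Partial bidiagonal: superdiagonal entries at 0-based rows `p ≥ n-1-c`. -/
def pb (n c : ℕ) (t : ℕ → ℝ) : Matrix (Fin n) (Fin n) ℝ :=
  Matrix.of fun p q =>
    (if p = q then (1 : ℝ) else 0) +
    (if (q : ℕ) = (p : ℕ) + 1 ∧ n - 1 - c ≤ (p : ℕ) then t ((p : ℕ) + 1) else 0)

lemma mul_elemU (n : ℕ) (M : Matrix (Fin n) (Fin n) ℝ) (i : ℕ) (t : ℝ)
    (hi : i - 1 < n) (p q : Fin n) :
    (M * elemU n i t) p q
      = M p q + (if (q : ℕ) = i ∧ 1 ≤ i then t * M p ⟨i - 1, hi⟩ else 0) := by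
  rw [Matrix.mul_apply]
  simp only [elemU, Matrix.of_apply, mul_add, mul_ite, mul_one, mul_zero]
  rw [Finset.sum_add_distrib]
  congr 1
  · simp [Finset.sum_ite_eq']
  · by_cases h : (q : ℕ) = i ∧ 1 ≤ i
    · rw [if_pos h]
      rw [Finset.sum_eq_single (⟨i - 1, hi⟩ : Fin n)]
      · rw [if_pos]
        · ring
        · exact ⟨by simp; omega, h.1⟩
      · intro r _ hr
        rw [if_neg]
        rintro ⟨h1, h2⟩
        exact hr (Fin.ext (by simp; omega))
      · simp
    · rw [if_neg h]
      apply Finset.sum_eq_zero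
      intro r _
      rw [if_neg]
      rintro ⟨h1, h2⟩
      exact h ⟨h2, by omega⟩

lemma mul_bidiag (n : ℕ) (M : Matrix (Fin n) (Fin n) ℝ) (l : ℕ) (a : ℕ → ℕ → ℝ)
    (p q : Fin n) :
    (M * bidiag n l a) p q
      = M p q + (if l < (q : ℕ) then
          a (q : ℕ) ((q : ℕ) - l) * M p ⟨(q : ℕ) - 1, by have := q.2; omega⟩ else 0) := by
  rw [Matrix.mul_apply]
  simp only [bidiag, Matrix.of_apply, mul_add, mul_ite, mul_one, mul_zero]
  rw [Finset.sum_add_distrib]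
  congr 1
  · simp [Finset.sum_ite_eq']
  · by_cases h : l < (q : ℕ)
    · rw [if_pos h]
      rw [Finset.sum_eq_single (⟨(q : ℕ) - 1, by have := q.2; omega⟩ : Fin n)]
      · rw [if_pos ⟨by simp; omega, by simp; omega⟩]
        have : ((⟨(q : ℕ) - 1, by have := q.2; omega⟩ : Fin n) : ℕ) + 1 = (q : ℕ) := by
          simp; omega
        rw [this]
        ring
      · intro r _ hr
        rw [if_neg]
        rintro ⟨h1, h2⟩
        exact hr (Fin.ext (by simp; omega))
      · simp
    · rw [if_neg h]
      apply Finset.sum_eq_zero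
      intro r _
      rw [if_neg]
      rintro ⟨h1, h2⟩
      omega

lemma pb_zero (n : ℕ) (t : ℕ → ℝ) : pb n 0 t = 1 := by
  ext p q
  have hq := q.2
  simp only [pb, Matrix.of_apply, Matrix.one_apply]
  rw [if_neg (by omega : ¬((q : ℕ) = (p : ℕ) + 1 ∧ n - 1 - 0 ≤ (p : ℕ))), add_zero]

lemma pb_succ (n c : ℕ) (hc : c + 1 ≤ n - 1) (t : ℕ → ℝ) :
    pb n c t * elemU n (n - 1 - c) (t (n - 1 - c)) = pb n (c + 1) t := by
  have hn : 2 ≤ n := by omega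
  ext p q
  rw [mul_elemU n _ _ _ (by omega)]
  have hp := p.2
  have hq := q.2
  simp only [pb, Matrix.of_apply, Fin.ext_iff, Fin.val_mk]
  split_ifs
  all_goals
    first
    | (exfalso; omega)
    | ring1
    | (congr 1; omega)
    | (ring_nf; congr 1; omega)

lemma range_prod_elemU (n : ℕ) (t : ℕ → ℝ) :
    ∀ c, c ≤ n - 1 →
    ((List.range c).map (fun k => elemU n (n - 1 - k) (t (n - 1 - k)))).prod = pb n c t := by
  intro c
  induction c with
  | zero => intro _; simp [pb_zero]
  | succ c ih =>
    intro hc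
    rw [List.range_succ, List.map_append, List.prod_append]
    simp only [List.map_cons, List.map_nil, List.prod_cons, List.prod_nil, mul_one]
    rw [ih (by omega), pb_succ n c hc]

/-- Partial product of bidiagonal factors. -/
def Pm (n : ℕ) (a : ℕ → ℕ → ℝ) (m : ℕ) : Matrix (Fin n) (Fin n) ℝ :=
  ((List.range m).map (fun l => bidiag n l a)).prod

lemma Pm_succ (n : ℕ) (a : ℕ → ℕ → ℝ) (m : ℕ) :
    Pm n a (m + 1) = Pm n a m * bidiag n m a := by
  simp [Pm, List.range_succ]

lemma Pm_band (n : ℕ) (a : ℕ → ℕ → ℝ) :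
    ∀ m (p q : Fin n), ((q : ℕ) < p ∨ (p : ℕ) + m < q) → Pm n a m p q = 0 := by
  intro m
  induction m with
  | zero =>
    intro p q h
    simp only [Pm, List.range_zero, List.map_nil, List.prod_nil]
    exact Matrix.one_apply_ne (fun hpq => by rw [hpq] at h; omega)
  | succ m ih =>
    intro p q h
    rw [Pm_succ, mul_bidiag]
    rw [ih p q (by omega)]
    by_cases hq : m < (q : ℕ)
    · rw [if_pos hq, ih p ⟨(q : ℕ) - 1, by have := q.2; omega⟩ (by simp; omega)]
      ring
    · rw [if_neg hq]; ring

lemma Pm_diag (n : ℕ) (a : ℕ → ℕ → ℝ) :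
    ∀ m (p q : Fin n), (q : ℕ) = (p : ℕ) + m →
    Pm n a m p q = ∏ l ∈ Finset.range m, a (l + (p : ℕ) + 1) ((p : ℕ) + 1) := by
  intro m
  induction m with
  | zero =>
    intro p q hq
    simp only [Pm, List.range_zero, List.map_nil, List.prod_nil, Finset.range_zero,
      Finset.prod_empty]
    rw [show p = q from Fin.ext (by omega)]
    exact Matrix.one_apply_eq q
  | succ m ih =>
    intro p q hq
    rw [Pm_succ, mul_bidiag]
    rw [Pm_band n a m p q (by omega)]
    rw [if_pos (by omega : m < (q : ℕ))]
    rw [ih p ⟨(q : ℕ) - 1, by have := q.2; omega⟩ (by simp; omega)]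
    rw [Finset.prod_range_succ]
    rw [show (q : ℕ) = m + (p : ℕ) + 1 by omega,
      show m + (p : ℕ) + 1 - m = (p : ℕ) + 1 by omega]
    ring

/-- The `i×i` submatrix with rows `0..i-1` and columns `c..c+i-1` (0-based). -/
def subM (n i c : ℕ) (h : c + i ≤ n) (M : Matrix (Fin n) (Fin n) ℝ) :
    Matrix (Fin i) (Fin i) ℝ :=
  M.submatrix (fun p => ⟨p.1, by have := p.2; omega⟩) (fun q => ⟨c + q.1, by have := q.2; omega⟩)

lemma subM_mul (n i j m : ℕ) (h : j + i ≤ n) (hjm : j ≤ m) (a : ℕ → ℕ → ℝ) :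
    subM n i j h (Pm n a (m + 1))
      = subM n i j h (Pm n a m) * bidiag i (m - j) (fun x y => a (j + x) y) := by
  ext p q
  rw [mul_bidiag]
  simp only [subM, Matrix.submatrix_apply]
  rw [Pm_succ, mul_bidiag]
  congr 1
  by_cases hq : m - j < (q : ℕ)
  · rw [if_pos hq, if_pos (by simp; omega : m < ((⟨j + q.1, by have := q.2; omega⟩ : Fin n) : ℕ))]
    congr 1
    · simp only [Fin.val_mk]
      congr 1
      omega
    · congr 1
      rw [Fin.ext_iff]
      simp only [Fin.val_mk]
      omega
  · rw [if_neg hq, if_neg (by simp; omega : ¬ m < ((⟨j + q.1, by have := q.2; omega⟩ : Fin n) : ℕ))]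

lemma det_bidiag (i l : ℕ) (b : ℕ → ℕ → ℝ) : (bidiag i l b).det = 1 := by
  rw [Matrix.det_of_upperTriangular]
  · apply Finset.prod_eq_one
    intro r _
    simp only [bidiag, Matrix.of_apply, if_pos rfl]
    rw [if_neg (by omega : ¬((r : ℕ) = (r : ℕ) + 1 ∧ l ≤ (r : ℕ)))]
    norm_num
  · intro p q hpq
    simp only [bidiag, Matrix.of_apply, id_eq] at *
    rw [if_neg (by rw [Fin.ext_iff]; omega : ¬ p = q),
      if_neg (by omega : ¬((q : ℕ) = (p : ℕ) + 1 ∧ l ≤ (p : ℕ)))]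
    ring

lemma det_subM_step (n i j m : ℕ) (h : j + i ≤ n) (hjm : j ≤ m) (a : ℕ → ℕ → ℝ) :
    (subM n i j h (Pm n a (m + 1))).det = (subM n i j h (Pm n a m)).det := by
  rw [subM_mul n i j m h hjm a, Matrix.det_mul, det_bidiag, mul_one]

lemma det_subM_Pj (n i j : ℕ) (h : j + i ≤ n) (a : ℕ → ℕ → ℝ) :
    (subM n i j h (Pm n a j)).det
      = ∏ p : Fin i, ∏ l ∈ Finset.range j, a (l + (p : ℕ) + 1) ((p : ℕ) + 1) := by
  have htri : (subM n i j h (Pm n a j)).BlockTriangular OrderDual.toDual := by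
    intro p q hpq
    simp only [subM, Matrix.submatrix_apply]
    apply Pm_band
    simp only [Fin.val_mk]
    right
    have : (p : ℕ) < (q : ℕ) := hpq
    omega
  rw [Matrix.det_of_lowerTriangular _ htri]
  apply Finset.prod_congr rfl
  intro p _
  simp only [subM, Matrix.submatrix_apply]
  apply Pm_diag
  simp only [Fin.val_mk]
  omega

lemma posUnip_eq_Pm (n : ℕ) (a : ℕ → ℕ → ℝ) : posUnip n a = Pm n a (n - 1) := by
  unfold posUnip Pm
  congr 1
  apply List.map_congr_left
  intro l hl
  rw [List.mem_range] at hl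
  rw [range_prod_elemU n (fun x => a x (x - l)) (n - 1 - l) (by omega)]
  ext p q
  simp only [pb, bidiag, Matrix.of_apply]
  rw [show n - 1 - (n - 1 - l) = l from by omega]

theorem clusterX_prod' (n : ℕ) (hn : 2 ≤ n) (a : ℕ → ℕ → ℝ)
    (i j : ℕ) (hi : 1 ≤ i) (hj : 1 ≤ j) (hij : i + j ≤ n) :
    clusterX n (posUnip n a) i (i + j)
      = ∏ m ∈ Finset.range j, ∏ p ∈ Finset.range i, a (m + p + 1) (p + 1) := by
  have hcond : 1 ≤ i ∧ i < i + j ∧ i + j ≤ n := ⟨hi, by omega, hij⟩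
  rw [clusterX, dif_pos hcond]
  have hsub : j + i ≤ n := by omega
  have hmat : (Matrix.of fun p q : Fin i =>
      posUnip n a ⟨p.1, by have := p.2; omega⟩ ⟨i + j - i + q.1, by have := q.2; omega⟩)
      = subM n i j hsub (posUnip n a) := by
    ext p q
    simp only [Matrix.of_apply, subM, Matrix.submatrix_apply]
    congr 1
    rw [Fin.ext_iff]
    simp only [Fin.val_mk]
    omega
  rw [hmat, posUnip_eq_Pm]
  have key : ∀ d, j + d ≤ n - 1 →
      (subM n i j hsub (Pm n a (j + d))).det = (subM n i j hsub (Pm n a j)).det := by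
    intro d
    induction d with
    | zero => intro _; rfl
    | succ d ih =>
      intro hd
      rw [show j + (d + 1) = (j + d) + 1 by omega,
        det_subM_step n i j (j + d) hsub (by omega) a, ih (by omega)]
  have hj' : j ≤ n - 1 := by omega
  rw [show n - 1 = j + (n - 1 - j) by omega, key (n - 1 - j) (by omega),
    det_subM_Pj n i j hsub a]
  rw [Fin.prod_univ_eq_prod_range (fun p => ∏ l ∈ Finset.range j, a (l + p + 1) (p + 1)) i]
  rw [Finset.prod_comm]

/-- For positive parameters `a_{ij}` (`1 ≤ j ≤ i ≤ n-1`), the cluster variables of the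
unipotent matrix `g` satisfy `x_{i,i+j} = ∏_{m=1}^{j} ∏_{p=1}^{i} a_{m+p-1,p}`. -/
theorem clusterX_prod (n : ℕ) (hn : 2 ≤ n) (a : ℕ → ℕ → ℝ)
    (ha : ∀ i j : ℕ, 1 ≤ j → j ≤ i → i ≤ n - 1 → 0 < a i j)
    (i j : ℕ) (hi : 1 ≤ i) (hj : 1 ≤ j) (hij : i + j ≤ n) :
    clusterX n (posUnip n a) i (i + j)
      = ∏ m ∈ Finset.range j, ∏ p ∈ Finset.range i, a (m + p + 1) (p + 1) := by
  exact clusterX_prod' n hn a i j hi hj hij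
end

section
/- With notation as in the cluster parametrization of upper unipotent totally positive matrices, the inverse change of variables is a_{i,j} = (x_{j,i+1} x_{j-1,i-1})/(x_{j,i} x_{j-1,i}), where x_{i,i} = x_{i,0} = x_{0,j} = 1. -/
/-! Auxiliary machinery -/

/-- Shift of the parameter family: `shiftA a i j = a (i+1) j`. -/
def shiftA (a : ℕ → ℕ → ℝ) : ℕ → ℕ → ℝ := fun i j => a (i + 1) j

/-- `hf a p c t = Σ` over weakly decreasing sequences `(m_i)_{i=p}^{c-1}` with values in
`[1, t]` of `∏ a i (m_i)`. -/
def hf (a : ℕ → ℕ → ℝ) (p c t : ℕ) : ℝ :=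
  if c ≤ p then 1 else ∑ u ∈ Finset.range t, a p (u + 1) * hf a (p + 1) c (u + 1)
termination_by c - p
decreasing_by omega

lemma hf_of_le (a : ℕ → ℕ → ℝ) {p c : ℕ} (t : ℕ) (h : c ≤ p) : hf a p c t = 1 := by
  rw [hf]; simp [h]

lemma hf_of_gt (a : ℕ → ℕ → ℝ) {p c : ℕ} (t : ℕ) (h : p < c) :
    hf a p c t = ∑ u ∈ Finset.range t, a p (u + 1) * hf a (p + 1) c (u + 1) := by
  rw [hf]; simp [Nat.not_le.mpr h]

lemma hf_succ_t (a : ℕ → ℕ → ℝ) {p c : ℕ} (t : ℕ) (h : p < c) :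
    hf a p c (t + 1) = hf a p c t + a p (t + 1) * hf a (p + 1) c (t + 1) := by
  rw [hf_of_gt a _ h, hf_of_gt a _ h, Finset.sum_range_succ]

lemma hf_shift (a : ℕ → ℕ → ℝ) : ∀ (N p c t : ℕ), c - p ≤ N →
    hf (shiftA a) p c t = hf a (p + 1) (c + 1) t := by
  intro N
  induction N with
  | zero =>
    intro p c t h
    rw [hf_of_le _ t (by omega), hf_of_le _ t (by omega)]
  | succ N ih =>
    intro p c t h
    by_cases hcp : c ≤ p
    · rw [hf_of_le _ t hcp, hf_of_le _ t (by omega)]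
    · rw [hf_of_gt _ t (by omega), hf_of_gt _ t (by omega)]
      refine Finset.sum_congr rfl fun u _ => ?_
      rw [ih (p + 1) c (u + 1) (by omega)]
      rfl

/-- Entries of the limit matrix `g`: `Gent a p q` is the `(p,q)` entry (1-based). -/
noncomputable def Gent (a : ℕ → ℕ → ℝ) (p q : ℕ) : ℝ :=
  if q < p then 0 else hf a p q p

lemma Gent_diag (a : ℕ → ℕ → ℝ) (p : ℕ) : Gent a p p = 1 := by
  rw [Gent, if_neg (lt_irrefl p), hf_of_le _ _ le_rfl]

lemma Gent_of_lt (a : ℕ → ℕ → ℝ) {p q : ℕ} (h : q < p) : Gent a p q = 0 := by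
  rw [Gent, if_pos h]

lemma Gent_zero_row (a : ℕ → ℕ → ℝ) {q : ℕ} (h : 1 ≤ q) : Gent a 0 q = 0 := by
  rw [Gent, if_neg (by omega), hf_of_gt _ _ (by omega)]
  simp

/-- The key three-term recurrence for entries. -/
lemma Gent_rec (a : ℕ → ℕ → ℝ) (p q : ℕ) :
    Gent a (p + 1) (q + 1) =
      Gent (shiftA a) p q + a (p + 1) (p + 1) * Gent (shiftA a) (p + 1) q := by
  rcases lt_trichotomy q p with h | h | h
  · rw [Gent_of_lt _ (by omega), Gent_of_lt _ (by omega), Gent_of_lt _ (by omega)]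
    ring
  · subst h
    rw [Gent_diag, Gent_diag, Gent_of_lt _ (by omega)]
    ring
  · -- q > p
    rw [Gent, if_neg (by omega), Gent, if_neg (by omega), Gent, if_neg (by omega)]
    rw [hf_shift a (q - p) p q p (by omega), hf_shift a (q - p) (p + 1) q (p + 1) (by omega)]
    exact hf_succ_t a p (by omega)

lemma sum_indicator_nat {n : ℕ} (v : Fin n → ℝ) (j : ℕ) :
    ∑ k : Fin n, (if (k : ℕ) = j then v k else 0)
      = if h : j < n then v ⟨j, h⟩ else 0 := by
  split
  · rename_i h
    rw [Finset.sum_eq_single_of_mem ⟨j, h⟩ (Finset.mem_univ _)]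
    · rw [if_pos rfl]
    · intro b _ hb
      rw [if_neg (fun hc => hb (Fin.ext hc))]
  · rename_i h
    apply Finset.sum_eq_zero
    intro k _
    rw [if_neg (by have := k.2; omega)]

/-- Partial products of elementary matrices with decreasing indices are bidiagonal. -/
def bidiagB (n : ℕ) (c : ℕ → ℝ) (m : ℕ) : Matrix (Fin n) (Fin n) ℝ :=
  Matrix.of fun p q =>
    (if p = q then (1 : ℝ) else 0) +
    (if (q : ℕ) = (p : ℕ) + 1 ∧ n - 1 - m ≤ (p : ℕ) then c ((p : ℕ) + 1) else 0)

lemma bidiagB_zero (n : ℕ) (c : ℕ → ℝ) : bidiagB n c 0 = 1 := by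
  ext p q
  have hq := q.2
  simp only [bidiagB, Matrix.of_apply, Matrix.one_apply]
  have : ¬ ((q : ℕ) = (p : ℕ) + 1 ∧ n - 1 - 0 ≤ (p : ℕ)) := by omega
  rw [if_neg this, add_zero]

lemma prod_elemU (n : ℕ) (c : ℕ → ℝ) :
    ∀ m, m ≤ n - 1 →
      ((List.range m).map (fun k => elemU n (n - 1 - k) (c (n - 1 - k)))).prod
        = bidiagB n c m := by
  intro m
  induction m with
  | zero => simpa using (bidiagB_zero n c).symm
  | succ m ih =>
    intro hm
    rw [List.range_succ, List.map_append, List.prod_append, List.map_singleton,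
      List.prod_singleton, ih (by omega)]
    ext p q
    rw [Matrix.mul_apply]
    have hsum : ∀ k : Fin n,
        bidiagB n c m p k * elemU n (n - 1 - m) (c (n - 1 - m)) k q
          = (if (k : ℕ) = (q : ℕ) then bidiagB n c m p k else 0)
            + (if (q : ℕ) = n - 1 - m then
                (if (k : ℕ) = n - 2 - m then bidiagB n c m p k * c (n - 1 - m) else 0)
              else 0) := by
      intro k
      simp only [elemU, Matrix.of_apply, Matrix.one_apply, mul_add]
      congr 1
      · by_cases h : k = q
        · subst h; rw [if_pos rfl, if_pos rfl, mul_one]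
        · rw [if_neg h, if_neg (fun hc => h (Fin.ext hc)), mul_zero]
      · by_cases hq2 : (q : ℕ) = n - 1 - m
        · rw [if_pos hq2]
          by_cases hk : (k : ℕ) = n - 2 - m
          · have : (k : ℕ) + 1 = n - 1 - m ∧ (q : ℕ) = n - 1 - m := by omega
            rw [if_pos this, if_pos hk]
          · have : ¬ ((k : ℕ) + 1 = n - 1 - m ∧ (q : ℕ) = n - 1 - m) := by omega
            rw [if_neg this, if_neg hk, mul_zero]
        · have : ¬ ((k : ℕ) + 1 = n - 1 - m ∧ (q : ℕ) = n - 1 - m) := by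
            intro hc; exact hq2 hc.2
          rw [if_neg this, if_neg hq2, mul_zero]
    rw [Finset.sum_congr rfl (fun k _ => hsum k), Finset.sum_add_distrib,
      sum_indicator_nat, dif_pos q.2]
    by_cases hq2 : (q : ℕ) = n - 1 - m
    · simp only [if_pos hq2]
      rw [sum_indicator_nat, dif_pos (by omega : n - 2 - m < n)]
      -- bidiagB value at (p, n-2-m)
      have hval : bidiagB n c m p ⟨n - 2 - m, by omega⟩
          = if (p : ℕ) = n - 2 - m then (1 : ℝ) else 0 := by
        simp only [bidiagB, Matrix.of_apply]
        have h2 : ¬ ((n - 2 - m : ℕ) = (p : ℕ) + 1 ∧ n - 1 - m ≤ (p : ℕ)) := by omega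
        rw [if_neg h2, add_zero]
        by_cases h3 : (p : ℕ) = n - 2 - m
        · rw [if_pos (Fin.ext h3 : p = ⟨n - 2 - m, by omega⟩), if_pos h3]
        · rw [if_neg (fun hc => h3 (by exact_mod_cast congrArg Fin.val hc)), if_neg h3]
      rw [hval]
      simp only [bidiagB, Matrix.of_apply]
      by_cases h3 : (p : ℕ) = n - 2 - m
      · rw [if_pos h3, one_mul]
        have e1 : ¬ (p = q) := by
          intro hc; rw [hc] at h3; omega
        have e2 : ¬ ((q : ℕ) = (p : ℕ) + 1 ∧ n - 1 - m ≤ (p : ℕ)) := by omega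
        have e3 : (q : ℕ) = (p : ℕ) + 1 ∧ n - 1 - (m + 1) ≤ (p : ℕ) := by omega
        rw [if_neg e1, if_neg e2, if_pos e3]
        have : (p : ℕ) + 1 = n - 1 - m := by omega
        rw [this, add_zero, zero_add]
      · rw [if_neg h3, zero_mul, add_zero]
        congr 1
        by_cases h4 : (q : ℕ) = (p : ℕ) + 1 ∧ n - 1 - m ≤ (p : ℕ)
        · rw [if_pos h4, if_pos (by omega : (q:ℕ) = (p:ℕ) + 1 ∧ n - 1 - (m+1) ≤ (p:ℕ))]
        · rw [if_neg h4, if_neg (by omega : ¬((q:ℕ) = (p:ℕ) + 1 ∧ n - 1 - (m+1) ≤ (p:ℕ)))]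
    · simp only [if_neg hq2, Finset.sum_const_zero, add_zero]
      simp only [bidiagB, Matrix.of_apply]
      congr 1
      by_cases h4 : (q : ℕ) = (p : ℕ) + 1 ∧ n - 1 - m ≤ (p : ℕ)
      · rw [if_pos h4, if_pos (by omega : (q:ℕ) = (p:ℕ) + 1 ∧ n - 1 - (m+1) ≤ (p:ℕ))]
      · rw [if_neg h4, if_neg (by omega : ¬((q:ℕ) = (p:ℕ) + 1 ∧ n - 1 - (m+1) ≤ (p:ℕ)))]

/-- Embedding `M ↦ 1 ⊕ M` into matrices one size bigger. -/
def embedM (m : ℕ) (M : Matrix (Fin m) (Fin m) ℝ) : Matrix (Fin (m + 1)) (Fin (m + 1)) ℝ :=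
  Matrix.of fun p q =>
    if hp : (p : ℕ) = 0 then (if (q : ℕ) = 0 then 1 else 0)
    else if hq : (q : ℕ) = 0 then 0
    else M ⟨(p : ℕ) - 1, by have := p.2; omega⟩ ⟨(q : ℕ) - 1, by have := q.2; omega⟩

lemma embedM_one (m : ℕ) : embedM m 1 = 1 := by
  ext p q
  have hp2 := p.2
  simp only [embedM, Matrix.of_apply, Matrix.one_apply]
  by_cases hp : (p : ℕ) = 0
  · rw [dif_pos hp]
    by_cases hq : (q : ℕ) = 0
    · rw [if_pos hq, if_pos (Fin.ext (by omega : (p : ℕ) = (q : ℕ)))]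
    · rw [if_neg hq, if_neg (fun hc : p = q => hq (by rw [← congrArg Fin.val hc, hp]))]
  · rw [dif_neg hp]
    by_cases hq : (q : ℕ) = 0
    · rw [dif_pos hq, if_neg (fun hc : p = q => hp (by rw [congrArg Fin.val hc, hq]))]
    · rw [dif_neg hq]
      by_cases h : (p : ℕ) = (q : ℕ)
      · rw [if_pos (Fin.ext (show (p : ℕ) - 1 = (q : ℕ) - 1 by omega)), if_pos (Fin.ext h)]
      · rw [if_neg (fun hc => h (by
            have h2 : (p : ℕ) - 1 = (q : ℕ) - 1 := congrArg Fin.val hc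
            omega)), if_neg (fun hc => h (congrArg Fin.val hc))]

lemma embedM_mul (m : ℕ) (A B : Matrix (Fin m) (Fin m) ℝ) :
    embedM m (A * B) = embedM m A * embedM m B := by
  ext p q
  rw [Matrix.mul_apply, Fin.sum_univ_succ]
  by_cases hp : (p : ℕ) = 0 <;> by_cases hq : (q : ℕ) = 0 <;>
    simp only [Fin.val_eq_zero_iff] at hp hq <;>
    simp [embedM, hp, hq, Matrix.mul_apply, Nat.succ_ne_zero]

/-- `embedM` as a monoid hom. -/
def embedHom (m : ℕ) : Matrix (Fin m) (Fin m) ℝ →* Matrix (Fin (m + 1)) (Fin (m + 1)) ℝ where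
  toFun := embedM m
  map_one' := embedM_one m
  map_mul' := embedM_mul m

lemma embedM_list_prod (m : ℕ) (L : List (Matrix (Fin m) (Fin m) ℝ)) :
    embedM m L.prod = (L.map (embedM m)).prod := by
  exact (List.prod_hom L (embedHom m)).symm

lemma embedM_elemU (m i : ℕ) (t : ℝ) (hi : 1 ≤ i) :
    embedM m (elemU m i t) = elemU (m + 1) (i + 1) t := by
  ext p q
  have hp2 := p.2
  simp only [embedM, elemU, Matrix.of_apply]
  by_cases hp : (p : ℕ) = 0
  · rw [dif_pos hp]
    by_cases hq : (q : ℕ) = 0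
    · rw [if_pos hq, if_pos (Fin.ext (by omega : (p : ℕ) = (q : ℕ))),
        if_neg (by omega : ¬((p : ℕ) + 1 = i + 1 ∧ (q : ℕ) = i + 1)), add_zero]
    · rw [if_neg hq, if_neg (fun hc : p = q => hq (by rw [← congrArg Fin.val hc, hp])),
        if_neg (by omega : ¬((p : ℕ) + 1 = i + 1 ∧ (q : ℕ) = i + 1)), add_zero]
  · rw [dif_neg hp]
    by_cases hq : (q : ℕ) = 0
    · rw [dif_pos hq, if_neg (fun hc : p = q => hp (by rw [congrArg Fin.val hc, hq])),
        if_neg (by omega : ¬((p : ℕ) + 1 = i + 1 ∧ (q : ℕ) = i + 1)), add_zero]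
    · rw [dif_neg hq]
      congr 1
      · by_cases h : (p : ℕ) = (q : ℕ)
        · rw [if_pos (Fin.ext (show (p : ℕ) - 1 = (q : ℕ) - 1 by omega)),
            if_pos (Fin.ext h)]
        · rw [if_neg (fun hc => h (by
              have h2 : (p : ℕ) - 1 = (q : ℕ) - 1 := congrArg Fin.val hc
              omega)),
            if_neg (fun hc => h (congrArg Fin.val hc))]
      · by_cases h : (p : ℕ) - 1 + 1 = i ∧ (q : ℕ) - 1 = i
        · rw [if_pos h, if_pos (by omega : (p : ℕ) + 1 = i + 1 ∧ (q : ℕ) = i + 1)]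
        · rw [if_neg h, if_neg (by omega : ¬((p : ℕ) + 1 = i + 1 ∧ (q : ℕ) = i + 1))]

/-- The decomposition `g_{m+1}(a) = B₀(a) · (1 ⊕ g_m(shiftA a))`. -/
lemma posUnip_decomp (m : ℕ) (hm : 1 ≤ m) (a : ℕ → ℕ → ℝ) :
    posUnip (m + 1) a
      = bidiagB (m + 1) (fun i => a i i) m * embedM m (posUnip m (shiftA a)) := by
  have hrange : List.range (m + 1 - 1) = 0 :: List.map Nat.succ (List.range (m - 1)) := by
    rw [show m + 1 - 1 = (m - 1) + 1 by omega, List.range_succ_eq_map]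
  rw [posUnip, hrange, List.map_cons, List.prod_cons]
  congr 1
  · rw [← prod_elemU (m + 1) (fun i => a i i) m (by omega)]
    rw [(by omega : m + 1 - 1 - 0 = m)]
    simp only [Nat.sub_zero]
  · rw [List.map_map, posUnip, embedM_list_prod, List.map_map]
    congr 1
    apply List.map_congr_left
    intro l hl
    have hl' : l < m - 1 := List.mem_range.mp hl
    simp only [Function.comp_apply]
    rw [show m + 1 - 1 - Nat.succ l = m - 1 - l by omega]
    rw [embedM_list_prod, List.map_map]
    congr 1
    apply List.map_congr_left
    intro k hk
    have hk' : k < m - 1 - l := List.mem_range.mp hk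
    simp only [Function.comp_apply]
    rw [embedM_elemU m (m - 1 - k) _ (by omega)]
    have e2 : shiftA a (m - 1 - k) (m - 1 - k - l) = a (m + 1 - 1 - k) (m + 1 - 1 - k - Nat.succ l) := by
      rw [shiftA]
      congr 1 <;> omega
    rw [e2, show m - 1 - k + 1 = m + 1 - 1 - k by omega]

lemma embedM_entry (m : ℕ) (a : ℕ → ℕ → ℝ)
    (ih : ∀ (p q : Fin m), posUnip m a p q = Gent a ((p : ℕ) + 1) ((q : ℕ) + 1))
    (k q : Fin (m + 1)) :
    embedM m (posUnip m a) k q = Gent a (k : ℕ) (q : ℕ) := by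
  have hk2 := k.2
  have hq2 := q.2
  simp only [embedM, Matrix.of_apply]
  by_cases hk : (k : ℕ) = 0
  · rw [dif_pos hk]
    by_cases hq : (q : ℕ) = 0
    · rw [if_pos hq, hk, hq, Gent, if_neg (by omega), hf_of_le _ _ le_rfl]
    · rw [if_neg hq, hk, Gent_zero_row a (by omega)]
  · rw [dif_neg hk]
    by_cases hq : (q : ℕ) = 0
    · rw [dif_pos hq, hq, Gent_of_lt a (by omega)]
    · rw [dif_neg hq, ih]
      show Gent a ((k : ℕ) - 1 + 1) ((q : ℕ) - 1 + 1) = _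
      congr 1 <;> omega

lemma posUnip_apply : ∀ (n : ℕ) (a : ℕ → ℕ → ℝ) (p q : Fin n),
    posUnip n a p q = Gent a ((p : ℕ) + 1) ((q : ℕ) + 1) := by
  intro n
  induction n with
  | zero => intro a p q; exact p.elim0
  | succ m ih =>
    intro a p q
    rcases Nat.eq_zero_or_pos m with hm | hm
    · subst hm
      have hp0 : (p : ℕ) = 0 := by have := p.2; omega
      have hq0 : (q : ℕ) = 0 := by have := q.2; omega
      have h1 : posUnip 1 a = 1 := by
        rw [posUnip]
        norm_num
      rw [h1, Matrix.one_apply, if_pos (Fin.ext (hp0.trans hq0.symm)), hp0, hq0]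
      exact (Gent_diag a 1).symm
    · have hp2 := p.2
      have hq2 := q.2
      rw [posUnip_decomp m hm a, Matrix.mul_apply]
      have hsum : ∀ k : Fin (m + 1),
          bidiagB (m + 1) (fun i => a i i) m p k * embedM m (posUnip m (shiftA a)) k q
            = (if (k : ℕ) = (p : ℕ) then Gent (shiftA a) (k : ℕ) (q : ℕ) else 0)
              + (if (k : ℕ) = (p : ℕ) + 1 then
                  a ((p : ℕ) + 1) ((p : ℕ) + 1) * Gent (shiftA a) (k : ℕ) (q : ℕ) else 0) := by
        intro k
        rw [embedM_entry m (shiftA a) (ih (shiftA a)) k q]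
        simp only [bidiagB, Matrix.of_apply, add_mul]
        congr 1
        · by_cases h : (k : ℕ) = (p : ℕ)
          · rw [if_pos (Fin.ext h.symm), if_pos h, one_mul]
          · rw [if_neg (fun hc : p = k => h (congrArg Fin.val hc).symm), if_neg h, zero_mul]
        · by_cases h : (k : ℕ) = (p : ℕ) + 1
          · rw [if_pos (by omega : (k : ℕ) = (p : ℕ) + 1 ∧ m + 1 - 1 - m ≤ (p : ℕ)), if_pos h]
          · rw [if_neg (by omega : ¬((k : ℕ) = (p : ℕ) + 1 ∧ m + 1 - 1 - m ≤ (p : ℕ))),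
              if_neg h, zero_mul]
      rw [Finset.sum_congr rfl (fun k _ => hsum k), Finset.sum_add_distrib,
        sum_indicator_nat, sum_indicator_nat, dif_pos hp2, Gent_rec]
      congr 1
      by_cases h : (p : ℕ) + 1 < m + 1
      · rw [dif_pos h]
      · rw [dif_neg h, Gent_of_lt _ (by omega : (q : ℕ) < (p : ℕ) + 1), mul_zero]

lemma det_gent (r : ℕ) : ∀ (d : ℕ) (a : ℕ → ℕ → ℝ),
    (Matrix.of fun p c : Fin r => Gent a ((p : ℕ) + 1) (d + (c : ℕ) + 1)).det
      = ∏ q ∈ Finset.range r, ∏ e ∈ Finset.range d, a (q + 1 + e) (q + 1) := by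
  intro d
  induction d with
  | zero =>
    intro a
    rw [Matrix.det_of_upperTriangular (by
      intro p c hc
      simp only [Matrix.of_apply]
      have hc' : (c : ℕ) < (p : ℕ) := by simpa using Fin.lt_def.mp hc
      exact Gent_of_lt a (by omega))]
    simp [Gent_diag]
  | succ d ihd =>
    intro a
    have hfac : (Matrix.of fun p c : Fin r => Gent a ((p : ℕ) + 1) ((d + 1) + (c : ℕ) + 1))
        = (Matrix.of fun p c : Fin r =>
            if p = c then a ((p : ℕ) + 1) ((p : ℕ) + 1)
            else if (p : ℕ) = (c : ℕ) + 1 then (1 : ℝ) else 0)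
          * (Matrix.of fun p c : Fin r => Gent (shiftA a) ((p : ℕ) + 1) (d + (c : ℕ) + 1)) := by
      ext p c
      rw [Matrix.mul_apply]
      simp only [Matrix.of_apply]
      by_cases hp : (p : ℕ) = 0
      · have hsum : ∀ k : Fin r,
            (if p = k then a ((p : ℕ) + 1) ((p : ℕ) + 1)
              else if (p : ℕ) = (k : ℕ) + 1 then (1 : ℝ) else 0)
              * Gent (shiftA a) ((k : ℕ) + 1) (d + (c : ℕ) + 1)
            = (if (k : ℕ) = (p : ℕ) then
                a ((p : ℕ) + 1) ((p : ℕ) + 1) * Gent (shiftA a) ((k : ℕ) + 1) (d + (c : ℕ) + 1)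
              else 0) := by
          intro k
          by_cases h : (k : ℕ) = (p : ℕ)
          · rw [if_pos (Fin.ext h.symm), if_pos h]
          · rw [if_neg (fun hc : p = k => h (congrArg Fin.val hc).symm),
              if_neg (by omega : ¬ (p : ℕ) = (k : ℕ) + 1), if_neg h, zero_mul]
        rw [Finset.sum_congr rfl (fun k _ => hsum k), sum_indicator_nat, dif_pos p.2]
        rw [show (d + 1) + (c : ℕ) + 1 = (d + (c : ℕ) + 1) + 1 by omega, Gent_rec,
          hp, Gent_zero_row _ (by omega), zero_add]
      · have hsum : ∀ k : Fin r,
            (if p = k then a ((p : ℕ) + 1) ((p : ℕ) + 1)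
              else if (p : ℕ) = (k : ℕ) + 1 then (1 : ℝ) else 0)
              * Gent (shiftA a) ((k : ℕ) + 1) (d + (c : ℕ) + 1)
            = (if (k : ℕ) = (p : ℕ) then
                a ((p : ℕ) + 1) ((p : ℕ) + 1) * Gent (shiftA a) ((k : ℕ) + 1) (d + (c : ℕ) + 1)
              else 0)
              + (if (k : ℕ) = (p : ℕ) - 1 then
                  Gent (shiftA a) ((k : ℕ) + 1) (d + (c : ℕ) + 1) else 0) := by
          intro k
          by_cases h : (k : ℕ) = (p : ℕ)
          · rw [if_pos (Fin.ext h.symm), if_pos h, if_neg (by omega), add_zero]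
          · rw [if_neg (fun hc : p = k => h (congrArg Fin.val hc).symm), if_neg h, zero_add]
            by_cases h2 : (k : ℕ) = (p : ℕ) - 1
            · rw [if_pos (by omega : (p : ℕ) = (k : ℕ) + 1), if_pos h2, one_mul]
            · rw [if_neg (by omega : ¬ (p : ℕ) = (k : ℕ) + 1), if_neg h2, zero_mul]
        rw [Finset.sum_congr rfl (fun k _ => hsum k), Finset.sum_add_distrib,
          sum_indicator_nat, sum_indicator_nat, dif_pos p.2,
          dif_pos (show (p : ℕ) - 1 < r from by have := p.2; omega)]
        rw [show (d + 1) + (c : ℕ) + 1 = (d + (c : ℕ) + 1) + 1 by omega]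
        rw [show (p : ℕ) + 1 = ((p : ℕ) - 1 + 1) + 1 by omega, Gent_rec]
        rw [show (p : ℕ) - 1 + 1 + 1 = (p : ℕ) + 1 by omega,
          show ((⟨(p : ℕ) - 1, by have := p.2; omega⟩ : Fin r) : ℕ) + 1 = (p : ℕ) - 1 + 1 from rfl]
        ring
    rw [hfac, Matrix.det_mul, ihd (shiftA a)]
    rw [Matrix.det_of_lowerTriangular _ (by
      intro p c hc
      simp only [Matrix.of_apply]
      have h1 : (p : ℕ) < (c : ℕ) := Fin.lt_def.mp (OrderDual.toDual_lt_toDual.mp hc)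
      rw [if_neg (fun h => by rw [h] at h1; omega), if_neg (by omega)])]
    rw [show (∏ i : Fin r, (Matrix.of fun p c : Fin r =>
        if p = c then a ((p : ℕ) + 1) ((p : ℕ) + 1)
        else if (p : ℕ) = (c : ℕ) + 1 then (1 : ℝ) else 0) i i)
      = ∏ q ∈ Finset.range r, a (q + 1) (q + 1) from by
        rw [← Fin.prod_univ_eq_prod_range (fun q => a (q + 1) (q + 1)) r]
        exact Finset.prod_congr rfl fun x _ => by simp]
    rw [← Finset.prod_mul_distrib]
    apply Finset.prod_congr rfl
    intro q _
    rw [Finset.prod_range_succ', mul_comm]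
    congr 1

lemma clusterX_posUnip (n : ℕ) (a : ℕ → ℕ → ℝ) (r s : ℕ) (hs : s ≤ n) :
    clusterX n (posUnip n a) r s
      = ∏ q ∈ Finset.range r, ∏ e ∈ Finset.range (s - r), a (q + 1 + e) (q + 1) := by
  by_cases h : 1 ≤ r ∧ r < s ∧ s ≤ n
  · rw [clusterX, dif_pos h, ← det_gent r (s - r) a]
    congr 1
    ext p c
    simp only [Matrix.of_apply]
    rw [posUnip_apply]
  · rw [clusterX, dif_neg h]
    have h0 : r = 0 ∨ s - r = 0 := by omega
    rcases h0 with h0 | h0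
    · rw [h0]
      simp
    · rw [h0]
      simp

/-- Inverse change of variables of the cluster parametrization:
`a_{i,j} = (x_{j,i+1} x_{j-1,i-1}) / (x_{j,i} x_{j-1,i})`, with the convention
`x_{i,i} = x_{i,0} = x_{0,j} = 1`. -/
theorem a_eq_clusterX_ratio (n : ℕ) (hn : 2 ≤ n) (a : ℕ → ℕ → ℝ)
    (ha : ∀ i j : ℕ, 1 ≤ j → j ≤ i → i ≤ n - 1 → 0 < a i j)
    (i j : ℕ) (hj : 1 ≤ j) (hji : j ≤ i) (hi : i ≤ n - 1) :
    a i j = (clusterX n (posUnip n a) j (i + 1) * clusterX n (posUnip n a) (j - 1) (i - 1))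
      / (clusterX n (posUnip n a) j i * clusterX n (posUnip n a) (j - 1) i) := by
  have hin : i + 1 ≤ n := by omega
  rw [clusterX_posUnip n a j (i + 1) (by omega),
    clusterX_posUnip n a (j - 1) (i - 1) (by omega),
    clusterX_posUnip n a j i (by omega),
    clusterX_posUnip n a (j - 1) i (by omega)]
  rw [show i + 1 - j = (i - j) + 1 by omega, show i - (j - 1) = (i - j) + 1 by omega,
    show i - 1 - (j - 1) = i - j by omega]
  -- abbreviations
  set D := i - j with hD
  have h1 : (∏ q ∈ Finset.range j, ∏ e ∈ Finset.range (D + 1), a (q + 1 + e) (q + 1))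
      = (∏ q ∈ Finset.range j, ∏ e ∈ Finset.range D, a (q + 1 + e) (q + 1))
        * ∏ q ∈ Finset.range j, a (q + 1 + D) (q + 1) := by
    rw [← Finset.prod_mul_distrib]
    exact Finset.prod_congr rfl fun q _ => Finset.prod_range_succ _ _
  have h2 : (∏ q ∈ Finset.range (j - 1), ∏ e ∈ Finset.range (D + 1), a (q + 1 + e) (q + 1))
      = (∏ q ∈ Finset.range (j - 1), ∏ e ∈ Finset.range D, a (q + 1 + e) (q + 1))
        * ∏ q ∈ Finset.range (j - 1), a (q + 1 + D) (q + 1) := by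
    rw [← Finset.prod_mul_distrib]
    exact Finset.prod_congr rfl fun q _ => Finset.prod_range_succ _ _
  have h3 : (∏ q ∈ Finset.range j, a (q + 1 + D) (q + 1))
      = (∏ q ∈ Finset.range (j - 1), a (q + 1 + D) (q + 1)) * a i j := by
    rw [show j = (j - 1) + 1 from by omega] -- careful: rewrites every j?
    rw [Finset.prod_range_succ]
    congr 2
    omega
  have hposX3 : 0 < ∏ q ∈ Finset.range j, ∏ e ∈ Finset.range D, a (q + 1 + e) (q + 1) := by
    apply Finset.prod_pos
    intro q hq
    apply Finset.prod_pos
    intro e he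
    have hq' := Finset.mem_range.mp hq
    have he' := Finset.mem_range.mp he
    exact ha _ _ (by omega) (by omega) (by omega)
  have hposX2 : 0 < ∏ q ∈ Finset.range (j - 1), ∏ e ∈ Finset.range D, a (q + 1 + e) (q + 1) := by
    apply Finset.prod_pos
    intro q hq
    apply Finset.prod_pos
    intro e he
    have hq' := Finset.mem_range.mp hq
    have he' := Finset.mem_range.mp he
    exact ha _ _ (by omega) (by omega) (by omega)
  have hposP : 0 < ∏ q ∈ Finset.range (j - 1), a (q + 1 + D) (q + 1) := by
    apply Finset.prod_pos
    intro q hq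
    have hq' := Finset.mem_range.mp hq
    exact ha _ _ (by omega) (by omega) (by omega)
  rw [h1, h2, h3]
  rw [eq_div_iff (by positivity)]
  ring
end

section
/- Let g be an n×n matrix admitting a Gauss decomposition g = g_- g_0 g_+ with g_- lower unipotent, g_0 diagonal, g_+ upper unipotent. Then the (i,j) entry of g_+ (for i < j) equals det(N_i^j)/det(N_i), where N_i is the leading principal i×i submatrix of g and N_i^j is N_i with its last column replaced by (g_{1j}, …, g_{ij})^T. -/
/-- Gauss decomposition entry formula: if `g = g₋ g₀ g₊` with `g₋` lower unipotent,
`g₀` diagonal, `g₊` upper unipotent, and all leading principal minors of `g` are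
nonzero, then for `i < j` the `(i,j)` entry of `g₊` equals `det(Nᵢʲ)/det(Nᵢ)`,
where `Nᵢ` is the leading principal minor of `g` of size `i` (1-based; here of size
`i+1` for the 0-based index `i`), and `Nᵢʲ` is `Nᵢ` with its last column replaced by
`(g_{1j}, …, g_{ij})ᵀ`. -/
theorem gauss_upper_entry (n : ℕ) (g gl g0 gu : Matrix (Fin n) (Fin n) ℝ)
    (hdec : g = gl * g0 * gu)
    (hl : ∀ p q : Fin n, p < q → gl p q = 0) (hld : ∀ p : Fin n, gl p p = 1)
    (hd : ∀ p q : Fin n, p ≠ q → g0 p q = 0)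
    (hu : ∀ p q : Fin n, q < p → gu p q = 0) (hud : ∀ p : Fin n, gu p p = 1)
    (hminor : ∀ i : Fin n,
      Matrix.det (Matrix.of fun s t : Fin ((i : ℕ) + 1) =>
        g ⟨s.1, by have := s.2; have := i.2; omega⟩
          ⟨t.1, by have := t.2; have := i.2; omega⟩) ≠ 0)
    (i j : Fin n) (hij : i < j) :
    gu i j =
      Matrix.det (Matrix.of fun s t : Fin ((i : ℕ) + 1) =>
        if (t : ℕ) = (i : ℕ) then
          g ⟨s.1, by have := s.2; have := i.2; omega⟩ j
        else
          g ⟨s.1, by have := s.2; have := i.2; omega⟩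
            ⟨t.1, by have := t.2; have := i.2; omega⟩) /
      Matrix.det (Matrix.of fun s t : Fin ((i : ℕ) + 1) =>
        g ⟨s.1, by have := s.2; have := i.2; omega⟩
          ⟨t.1, by have := t.2; have := i.2; omega⟩) := by
  have hin : (i : ℕ) + 1 ≤ n := i.2
  let e : Fin ((i : ℕ) + 1) → Fin n := Fin.castLE hin
  -- g0 * gu is upper triangular with explicit entries
  have h0u : ∀ p q : Fin n, (g0 * gu) p q = g0 p p * gu p q := by
    intro p q
    rw [Matrix.mul_apply, Finset.sum_eq_single p]
    · intro b _ hb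
      rw [hd p b (Ne.symm hb), zero_mul]
    · intro h; exact absurd (Finset.mem_univ p) h
  have hzero : ∀ p q : Fin n, q < p → (g0 * gu) p q = 0 := by
    intro p q hq
    rw [h0u, hu p q hq, mul_zero]
  -- sum reduction: entries of g in the top rows only involve the leading block of gl
  have hsum : ∀ p : Fin n, (p : ℕ) < (i : ℕ) + 1 → ∀ q : Fin n,
      g p q = ∑ k : Fin ((i : ℕ) + 1), gl p (e k) * (g0 * gu) (e k) q := by
    intro p hp q
    have h1 : g p q = ∑ k : Fin n, gl p k * (g0 * gu) k q := by
      rw [hdec, Matrix.mul_assoc, Matrix.mul_apply]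
    rw [h1]
    have h2 : ∑ k : Fin ((i : ℕ) + 1), gl p (e k) * (g0 * gu) (e k) q
        = ∑ k ∈ Finset.univ.map (Fin.castLEEmb hin), gl p k * (g0 * gu) k q := by
      rw [Finset.sum_map]
      rfl
    rw [h2]
    symm
    apply Finset.sum_subset (Finset.subset_univ _)
    intro k _ hk
    have hk' : ¬ (k : ℕ) < (i : ℕ) + 1 := by
      intro hlt
      exact hk (Finset.mem_map.2 ⟨⟨k.1, hlt⟩, Finset.mem_univ _, rfl⟩)
    have hpk : p < k := by
      rw [Fin.lt_def]; omega
    rw [hl p k hpk, zero_mul]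
  -- the triangular factors, restricted to the leading block
  let L : Matrix (Fin ((i : ℕ) + 1)) (Fin ((i : ℕ) + 1)) ℝ :=
    Matrix.of fun s t => gl (e s) (e t)
  let U : Matrix (Fin ((i : ℕ) + 1)) (Fin ((i : ℕ) + 1)) ℝ :=
    Matrix.of fun s t => (g0 * gu) (e s) (e t)
  let U' : Matrix (Fin ((i : ℕ) + 1)) (Fin ((i : ℕ) + 1)) ℝ :=
    Matrix.of fun s t =>
      if (t : ℕ) = (i : ℕ) then (g0 * gu) (e s) j else (g0 * gu) (e s) (e t)
  have elt : ∀ s t : Fin ((i : ℕ) + 1), s < t → e s < e t := by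
    intro s t hst
    rw [Fin.lt_def] at hst ⊢
    exact hst
  -- determinant of L
  have hdetL : L.det = 1 := by
    rw [Matrix.det_of_lowerTriangular L (by
      intro s t hst
      exact hl (e s) (e t) (elt s t hst))]
    simp only [L, Matrix.of_apply]
    rw [Finset.prod_congr rfl fun s _ => hld (e s)]
    simp
  -- determinant of U
  have hdetU : U.det = ∏ s : Fin ((i : ℕ) + 1), g0 (e s) (e s) := by
    rw [Matrix.det_of_upperTriangular (by
      intro s t hst
      exact hzero (e s) (e t) (elt t s hst))]
    apply Finset.prod_congr rfl
    intro s _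
    simp only [U, Matrix.of_apply]
    rw [h0u, hud, mul_one]
  -- determinant of U'
  have hdetU' : U'.det = (∏ s : Fin ((i : ℕ) + 1), g0 (e s) (e s)) * gu i j := by
    rw [Matrix.det_of_upperTriangular (by
      intro s t hst
      have hst' : (t : ℕ) < (s : ℕ) := hst
      have ht : ¬ (t : ℕ) = (i : ℕ) := by omega
      simp only [U', Matrix.of_apply, if_neg ht]
      exact hzero (e s) (e t) (elt t s hst))]
    have hlast : e (Fin.last (i : ℕ)) = i := by
      apply Fin.ext
      rfl
    rw [Fin.prod_univ_castSucc, Fin.prod_univ_castSucc]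
    simp only [U', Matrix.of_apply]
    have h1 : ∀ s : Fin (i : ℕ),
        (if ((Fin.castSucc s : Fin ((i : ℕ) + 1)) : ℕ) = (i : ℕ) then
          (g0 * gu) (e (Fin.castSucc s)) j
        else (g0 * gu) (e (Fin.castSucc s)) (e (Fin.castSucc s)))
        = g0 (e (Fin.castSucc s)) (e (Fin.castSucc s)) := by
      intro s
      have : ¬ ((Fin.castSucc s : Fin ((i : ℕ) + 1)) : ℕ) = (i : ℕ) := by
        have := s.2
        simp only [Fin.coe_castSucc]
        omega
      rw [if_neg this, h0u, hud, mul_one]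
    rw [Finset.prod_congr rfl fun s _ => h1 s]
    have h2 : ((Fin.last (i : ℕ) : Fin ((i : ℕ) + 1)) : ℕ) = (i : ℕ) := rfl
    rw [if_pos h2, hlast, h0u, mul_assoc]
  -- the leading block of g and its modification factor through L
  have hN : (Matrix.of fun s t : Fin ((i : ℕ) + 1) =>
      g ⟨s.1, by have := s.2; have := i.2; omega⟩
        ⟨t.1, by have := t.2; have := i.2; omega⟩) = L * U := by
    ext s t
    rw [Matrix.mul_apply]
    exact hsum (e s) s.2 (e t)
  have hN' : (Matrix.of fun s t : Fin ((i : ℕ) + 1) =>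
      if (t : ℕ) = (i : ℕ) then
        g ⟨s.1, by have := s.2; have := i.2; omega⟩ j
      else
        g ⟨s.1, by have := s.2; have := i.2; omega⟩
          ⟨t.1, by have := t.2; have := i.2; omega⟩) = L * U' := by
    ext s t
    rw [Matrix.mul_apply]
    by_cases ht : (t : ℕ) = (i : ℕ)
    · simp only [Matrix.of_apply, L, U', if_pos ht]
      exact hsum (e s) s.2 j
    · simp only [Matrix.of_apply, L, U', if_neg ht]
      exact hsum (e s) s.2 (e t)
  have hP := hminor i
  rw [hN, Matrix.det_mul, hdetL, hdetU, one_mul] at hP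
  rw [hN, hN', Matrix.det_mul, Matrix.det_mul, hdetL, hdetU, hdetU', one_mul, one_mul]
  rw [mul_comm, mul_div_assoc, div_self hP, mul_one]
end

section
/- In an associative algebra with elements E_i, E_{i+1} satisfying KE relations of U_q(sl_n) and the quantum Serre relation E_i²E_{i+1} - (q+q^{-1})E_iE_{i+1}E_i + E_{i+1}E_i² = 0, together with invertible K_i, K_{i+1} with K_iE_j = q^{a_{ij}}E_jK_i (a_{ii}=2, a_{i,i+1}=a_{i+1,i}=-1), define 𝐄_i = q^{s_i}E_iK_i^{s_i} with s_{i+1} = s_i + 1. Then the modified Serre relations [𝐄_i, [𝐄_{i+1}, 𝐄_i]_𝔮] = 0 and [𝐄_{i+1}, [𝐄_{i+1}, 𝐄_i]_𝔮] = 0 hold, where 𝔮 = q² and [A,B]_𝔮 = AB - 𝔮^{-1}BA. -/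
lemma zpow_conj_aux {A : Type*} [Ring A] [Algebra ℂ A] (c : ℂ) (hc : c ≠ 0)
    (u : Aˣ) (x : A) (h : (u : A) * x = c • (x * (u : A))) (s : ℤ) :
    ((u ^ s : Aˣ) : A) * x = c ^ s • (x * ((u ^ s : Aˣ) : A)) := by
  have hinv : ((u⁻¹ : Aˣ) : A) * x = c⁻¹ • (x * ((u⁻¹ : Aˣ) : A)) := by
    have h2 : x * (u : A) = c⁻¹ • ((u : A) * x) := by
      rw [h, smul_smul, inv_mul_cancel₀ hc, one_smul]
    calc ((u⁻¹ : Aˣ) : A) * x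
        = ((u⁻¹ : Aˣ) : A) * ((x * (u : A)) * ((u⁻¹ : Aˣ) : A)) := by
          rw [mul_assoc x, Units.mul_inv, mul_one]
      _ = c⁻¹ • (((u⁻¹ : Aˣ) : A) * ((u : A) * (x * ((u⁻¹ : Aˣ) : A)))) := by
          rw [h2]
          simp only [smul_mul_assoc, mul_smul_comm, mul_assoc]
      _ = c⁻¹ • (x * ((u⁻¹ : Aˣ) : A)) := by
          rw [← mul_assoc, Units.inv_mul, one_mul]
  induction s using Int.induction_on with
  | zero => simp
  | succ n ih =>
      have h1 : u ^ ((n : ℤ) + 1) = u ^ (n : ℤ) * u := by rw [zpow_add_one]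
      rw [h1, Units.val_mul, mul_assoc, h, mul_smul_comm, ← mul_assoc, ih,
        smul_mul_assoc, smul_smul, mul_assoc, zpow_add_one₀ hc, mul_comm c]
  | pred n ih =>
      have h1 : u ^ (-(n : ℤ) - 1) = u ^ (-(n : ℤ)) * u⁻¹ := by
        rw [← zpow_neg_one, ← zpow_add]; ring_nf
      have h2 : (-(n : ℤ) - 1) = -(n : ℤ) + -1 := by ring
      rw [h1, Units.val_mul, mul_assoc, hinv, mul_smul_comm, ← mul_assoc, ih,
        smul_mul_assoc, smul_smul, mul_assoc, h2, zpow_add₀ hc, zpow_neg_one,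
        mul_comm c⁻¹]

/-- In an associative unital ℂ-algebra with `E_i, E_{i+1}` and invertible `K_i, K_{i+1}`
satisfying the `U_q(sl_n)` K-E relations and both quantum Serre relations, the modified
generators `𝐄_i = q^{s_i} E_i K_i^{s_i}` with `s_{i+1} = s_i + 1` satisfy the modified
Serre relations `[𝐄_i, [𝐄_{i+1}, 𝐄_i]_𝔮] = 0 = [𝐄_{i+1}, [𝐄_{i+1}, 𝐄_i]_𝔮]`,
where `𝔮 = q²` and `[A,B]_𝔮 = AB - 𝔮⁻¹BA`. -/
theorem modified_serre_relations {A : Type*} [Ring A] [Algebra ℂ A]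
    (q : ℂ) (hq0 : q ≠ 0) (hq1 : q ^ 2 ≠ 1)
    (E E' : A) (K K' : Aˣ)
    (hKE : (K : A) * E = q ^ 2 • (E * (K : A)))
    (hKE' : (K : A) * E' = q⁻¹ • (E' * (K : A)))
    (hK'E : (K' : A) * E = q⁻¹ • (E * (K' : A)))
    (hK'E' : (K' : A) * E' = q ^ 2 • (E' * (K' : A)))
    (hKK' : (K : A) * (K' : A) = (K' : A) * (K : A))
    (hserre1 : E * E * E' - (q + q⁻¹) • (E * E' * E) + E' * E * E = 0)
    (hserre2 : E' * E' * E - (q + q⁻¹) • (E' * E * E') + E * E' * E' = 0)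
    (s : ℤ) :
    (fun X Y : A => X * Y - Y * X)
        (q ^ s • (E * ((K ^ s : Aˣ) : A)))
        ((fun X Y : A => X * Y - (q ^ 2)⁻¹ • (Y * X))
          (q ^ (s + 1) • (E' * ((K' ^ (s + 1) : Aˣ) : A)))
          (q ^ s • (E * ((K ^ s : Aˣ) : A)))) = 0 ∧
    (fun X Y : A => X * Y - Y * X)
        (q ^ (s + 1) • (E' * ((K' ^ (s + 1) : Aˣ) : A)))
        ((fun X Y : A => X * Y - (q ^ 2)⁻¹ • (Y * X))
          (q ^ (s + 1) • (E' * ((K' ^ (s + 1) : Aˣ) : A)))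
          (q ^ s • (E * ((K ^ s : Aˣ) : A)))) = 0 := by
  have hq2 : (q : ℂ) ^ 2 ≠ 0 := pow_ne_zero 2 hq0
  have hqi : q⁻¹ ≠ 0 := inv_ne_zero hq0
  set Ks : A := ((K ^ s : Aˣ) : A) with hKs
  set L : A := ((K' ^ (s + 1) : Aˣ) : A) with hL
  have h1 : Ks * E = (q ^ 2) ^ s • (E * Ks) := zpow_conj_aux _ hq2 K E hKE s
  have h2 : Ks * E' = (q⁻¹) ^ s • (E' * Ks) := zpow_conj_aux _ hqi K E' hKE' s
  have h3 : L * E = (q⁻¹) ^ (s + 1) • (E * L) := zpow_conj_aux _ hqi K' E hK'E (s+1)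
  have h4 : L * E' = (q ^ 2) ^ (s + 1) • (E' * L) := zpow_conj_aux _ hq2 K' E' hK'E' (s+1)
  have hcomm : Commute K K' := Units.ext (by simpa using hKK')
  have h5 : L * Ks = Ks * L := by
    rw [hKs, hL, ← Units.val_mul, ← Units.val_mul, (hcomm.zpow_zpow s (s+1)).eq]
  -- variants for right-assoc terms
  have h1' : ∀ x : A, Ks * (E * x) = (q ^ 2) ^ s • (E * (Ks * x)) := fun x => by
    rw [← mul_assoc, h1, smul_mul_assoc, mul_assoc]
  have h2' : ∀ x : A, Ks * (E' * x) = (q⁻¹) ^ s • (E' * (Ks * x)) := fun x => by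
    rw [← mul_assoc, h2, smul_mul_assoc, mul_assoc]
  have h3' : ∀ x : A, L * (E * x) = (q⁻¹) ^ (s + 1) • (E * (L * x)) := fun x => by
    rw [← mul_assoc, h3, smul_mul_assoc, mul_assoc]
  have h4' : ∀ x : A, L * (E' * x) = (q ^ 2) ^ (s + 1) • (E' * (L * x)) := fun x => by
    rw [← mul_assoc, h4, smul_mul_assoc, mul_assoc]
  have h5' : ∀ x : A, L * (Ks * x) = Ks * (L * x) := fun x => by
    rw [← mul_assoc, h5, mul_assoc]
  constructor
  · show _ = (0:A)
    simp only [smul_mul_assoc, mul_smul_comm, smul_smul, mul_assoc, mul_sub, sub_mul,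
      smul_sub, h1', h2', h3', h4', h5', h1, h2, h3, h4, h5]
    set w : A := Ks * (Ks * L) with hw
    have hs1 := congrArg (· * w) hserre1
    simp only [sub_mul, add_mul, smul_mul_assoc, mul_assoc, zero_mul] at hs1
    rw [sub_add_eq_add_sub, sub_eq_zero] at hs1
    have heq : E * (E * (E' * w)) = (q + q⁻¹) • (E * (E' * (E * w))) - E' * (E * (E * w)) :=
      eq_sub_of_add_eq hs1
    rw [heq]
    have e1 : ((q:ℂ)^2)^s = q^s * q^s := by rw [sq, mul_zpow]
    have e2 : (q⁻¹:ℂ)^s = (q^s)⁻¹ := inv_zpow q s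
    have e3 : (q:ℂ)^(s+1) = q^s * q := zpow_add_one₀ hq0 s
    have e4 : ((q:ℂ)^2)^(s+1) = (q^s*q) * (q^s*q) := by rw [sq, mul_zpow, e3]
    have e5 : (q⁻¹:ℂ)^(s+1) = (q^s*q)⁻¹ := by rw [inv_zpow, e3]
    have ht : (q:ℂ)^s ≠ 0 := zpow_ne_zero s hq0
    simp only [e1, e2, e3, e4, e5]
    generalize (q:ℂ)^s = t at ht ⊢
    match_scalars <;> field_simp <;> ring
  · show _ = (0:A)
    simp only [smul_mul_assoc, mul_smul_comm, smul_smul, mul_assoc, mul_sub, sub_mul,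
      smul_sub, h1', h2', h3', h4', h5', h1, h2, h3, h4, h5]
    set w : A := Ks * (L * L) with hw
    have hs2 := congrArg (· * w) hserre2
    simp only [sub_mul, add_mul, smul_mul_assoc, mul_assoc, zero_mul] at hs2
    rw [sub_add_eq_add_sub, sub_eq_zero] at hs2
    have heq : E' * (E' * (E * w)) = (q + q⁻¹) • (E' * (E * (E' * w))) - E * (E' * (E' * w)) :=
      eq_sub_of_add_eq hs2
    rw [heq]
    have e1 : ((q:ℂ)^2)^s = q^s * q^s := by rw [sq, mul_zpow]
    have e2 : (q⁻¹:ℂ)^s = (q^s)⁻¹ := inv_zpow q s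
    have e3 : (q:ℂ)^(s+1) = q^s * q := zpow_add_one₀ hq0 s
    have e4 : ((q:ℂ)^2)^(s+1) = (q^s*q) * (q^s*q) := by rw [sq, mul_zpow, e3]
    have e5 : (q⁻¹:ℂ)^(s+1) = (q^s*q)⁻¹ := by rw [inv_zpow, e3]
    have ht : (q:ℂ)^s ≠ 0 := zpow_ne_zero s hq0
    simp only [e1, e2, e3, e4, e5]
    generalize (q:ℂ)^s = t at ht ⊢
    match_scalars <;> field_simp <;> ring
end

section
/- For the classical principal series shift-operator action of sl(n): with E_i acting by E_i·f(u) = Σ_{k=1}^{n-i} (1 + Σ_{j=k}^{n-i} u_{j,i+j}) f(…shifts…), F_i by the analogous formula, and H_i acting by multiplication by h_i(u) = Σ_{j=1}^{i-1} u_{ji} - Σ_{j=i+1}^{n} u_{ij} - Σ_{j=1}^{n-i} u_{j,i+j} + 2λ_i, the commutators satisfy [H_i, E_j] = a_{ij} E_j and [H_i, F_j] = -a_{ij} F_j, where a_{ij} is the Cartan matrix of type A_{n-1}. -/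
noncomputable section
open Finset

/-- The variable `u_{p,q}`, with the convention that `u_{p,q} = 0` unless
`1 ≤ p < q ≤ n` (in particular `u_{0,j} = u_{k,k} = 0`). -/
def mval (n : ℕ) (u : ℕ × ℕ → ℂ) (p q : ℕ) : ℂ :=
  if 1 ≤ p ∧ p < q ∧ q ≤ n then u (p, q) else 0

/-- The unit shift vector in the coordinate `u_{p,q}`; it vanishes (the shift is
non-existent) unless `1 ≤ p < q ≤ n`. -/
def uvec (n : ℕ) (p q : ℕ) : ℕ × ℕ → ℂ :=
  fun x => if x = (p, q) ∧ 1 ≤ p ∧ p < q ∧ q ≤ n then 1 else 0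

/-- The shift vector `e_{E_i}^k`: shifts `u_{k-1,i+k-1}` by `+1`, `u_{k-1,i+k}` by `-1`,
`u_{k,i+k-1}` by `-1`, `u_{k,i+k}` by `+1`. -/
def eShift (n i k : ℕ) : ℕ × ℕ → ℂ :=
  uvec n (k - 1) (i + k - 1) - uvec n (k - 1) (i + k) - uvec n k (i + k - 1) + uvec n k (i + k)

/-- The shift vector `e_{F_i}^k`: shifts `u_{k-1,i-1}` by `-1`, `u_{k-1,i}` by `+1`,
`u_{k,i}` by `+1`, `u_{k,i+1}` by `-1`. -/
def fShift (n i k : ℕ) : ℕ × ℕ → ℂ :=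
  uvec n (k - 1) i + uvec n k i - uvec n (k - 1) (i - 1) - uvec n k (i + 1)

/-- The coefficient `E_i^k(u) = 1 + Σ_{j=k}^{n-i} u_{j,i+j}`. -/
def Ecoef (n i k : ℕ) (u : ℕ × ℕ → ℂ) : ℂ :=
  1 + ∑ j ∈ Icc k (n - i), mval n u j (i + j)

/-- The coefficient `F_i^k(u) = 1 + Σ_{j=k}^{i} u_{j,i} - Σ_{j=i+1}^{n} u_{i,j} + 2λ_i`. -/
def Fcoef (n i k : ℕ) (lam : ℂ) (u : ℕ × ℕ → ℂ) : ℂ :=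
  1 + ∑ j ∈ Icc k i, mval n u j i - ∑ j ∈ Icc (i + 1) n, mval n u i j + 2 * lam

/-- The coefficient
`h_i(u) = Σ_{j=1}^{i-1} u_{j,i} - Σ_{j=i+1}^{n} u_{i,j} - Σ_{j=1}^{n-i} u_{j,i+j} + 2λ_i`. -/
def Hcoef (n i : ℕ) (lam : ℂ) (u : ℕ × ℕ → ℂ) : ℂ :=
  ∑ j ∈ Icc 1 (i - 1), mval n u j i - ∑ j ∈ Icc (i + 1) n, mval n u i j
    - ∑ j ∈ Icc 1 (n - i), mval n u j (i + j) + 2 * lam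

/-- The shift operator `E_i·f(u) = Σ_{k=1}^{n-i} E_i^k(u) f(u + e_{E_i}^k)`. -/
def Eop (n i : ℕ) (f : (ℕ × ℕ → ℂ) → ℂ) : (ℕ × ℕ → ℂ) → ℂ :=
  fun u => ∑ k ∈ Icc 1 (n - i), Ecoef n i k u * f (u + eShift n i k)

/-- The shift operator `F_i·f(u) = Σ_{k=1}^{i} F_i^k(u) f(u + e_{F_i}^k)`. -/
def Fop (n i : ℕ) (lam : ℂ) (f : (ℕ × ℕ → ℂ) → ℂ) : (ℕ × ℕ → ℂ) → ℂ :=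
  fun u => ∑ k ∈ Icc 1 i, Fcoef n i k lam u * f (u + fShift n i k)

/-- The multiplication operator `H_i·f(u) = h_i(u) f(u)`. -/
def Hop (n i : ℕ) (lam : ℂ) (f : (ℕ × ℕ → ℂ) → ℂ) : (ℕ × ℕ → ℂ) → ℂ :=
  fun u => Hcoef n i lam u * f u

/-- The Cartan matrix of type `A_{n-1}`. -/
def cartan (i j : ℕ) : ℂ :=
  if i = j then 2 else if i + 1 = j ∨ j + 1 = i then -1 else 0

lemma mval_add (n : ℕ) (u v : ℕ × ℕ → ℂ) (p q : ℕ) :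
    mval n (u + v) p q = mval n u p q + mval n v p q := by
  unfold mval; split_ifs <;> simp

lemma mval_sub (n : ℕ) (u v : ℕ × ℕ → ℂ) (p q : ℕ) :
    mval n (u - v) p q = mval n u p q - mval n v p q := by
  unfold mval; split_ifs <;> simp

lemma Hcoef_add (n i : ℕ) (lam : ℂ) (u v : ℕ × ℕ → ℂ) :
    Hcoef n i lam (u + v) = Hcoef n i lam u + Hcoef n i 0 v := by
  unfold Hcoef; simp only [mval_add, Finset.sum_add_distrib]; ring

lemma Hcoef_sub0 (n i : ℕ) (u v : ℕ × ℕ → ℂ) :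
    Hcoef n i 0 (u - v) = Hcoef n i 0 u - Hcoef n i 0 v := by
  unfold Hcoef; simp only [mval_sub, Finset.sum_sub_distrib]; ring

lemma sum_ind (s : Finset ℕ) (p : ℕ) (C : Prop) [Decidable C] :
    (∑ a ∈ s, if a = p ∧ C then (1:ℂ) else 0) = if p ∈ s ∧ C then 1 else 0 := by
  by_cases h : C
  · simp [h, Finset.sum_ite_eq' s p (fun _ => (1:ℂ))]
  · simp [h]

lemma Hcoef_uvec (n i p q : ℕ) : Hcoef n i 0 (uvec n p q) =
    (if (1 ≤ p ∧ p ≤ i - 1) ∧ (q = i ∧ 1 ≤ p ∧ p < q ∧ q ≤ n) then 1 else 0)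
    - (if (i + 1 ≤ q ∧ q ≤ n) ∧ (p = i ∧ 1 ≤ p ∧ p < q ∧ q ≤ n) then 1 else 0)
    - (if (1 ≤ p ∧ p ≤ n - i) ∧ (q = i + p ∧ 1 ≤ p ∧ p < q ∧ q ≤ n) then 1 else 0) := by
  unfold Hcoef
  have h1 : ∀ a : ℕ, mval n (uvec n p q) a i
      = if a = p ∧ (q = i ∧ 1 ≤ p ∧ p < q ∧ q ≤ n) then (1:ℂ) else 0 := by
    intro a; simp only [mval, uvec, Prod.mk.injEq]; split_ifs <;> first | rfl | omega
  have h2 : ∀ b : ℕ, mval n (uvec n p q) i b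
      = if b = q ∧ (p = i ∧ 1 ≤ p ∧ p < q ∧ q ≤ n) then (1:ℂ) else 0 := by
    intro b; simp only [mval, uvec, Prod.mk.injEq]; split_ifs <;> first | rfl | omega
  have h3 : ∀ a : ℕ, mval n (uvec n p q) a (i + a)
      = if a = p ∧ (q = i + p ∧ 1 ≤ p ∧ p < q ∧ q ≤ n) then (1:ℂ) else 0 := by
    intro a; simp only [mval, uvec, Prod.mk.injEq]; split_ifs <;> first | rfl | omega
  simp only [h1, h2, h3, sum_ind, Finset.mem_Icc]
  simp

set_option maxHeartbeats 4000000 in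
lemma key_E (n i j k : ℕ) (hn : 2 ≤ n) (hi : 1 ≤ i) (hi' : i ≤ n - 1)
    (hj : 1 ≤ j) (hj' : j ≤ n - 1) (hk : 1 ≤ k) (hk' : k ≤ n - j) :
    Hcoef n i 0 (eShift n j k) = - cartan i j := by
  unfold eShift
  rw [Hcoef_add, Hcoef_sub0, Hcoef_sub0]
  have hA : Hcoef n i 0 (uvec n (k - 1) (j + k - 1))
      = (if 2 ≤ k ∧ i = j + k - 1 then 1 else 0) - (if k = i + 1 then 1 else 0)
        - (if i = j ∧ 2 ≤ k then 1 else 0) := by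
    rw [Hcoef_uvec]; split_ifs <;> first | omega | norm_num
  have hB : Hcoef n i 0 (uvec n (k - 1) (j + k))
      = (if i = j + k ∧ 2 ≤ k then 1 else 0) - (if k = i + 1 then 1 else 0)
        - (if i = j + 1 ∧ 2 ≤ k then 1 else 0) := by
    rw [Hcoef_uvec]; split_ifs <;> first | omega | norm_num
  have hC : Hcoef n i 0 (uvec n k (j + k - 1))
      = (if i = j + k - 1 ∧ 2 ≤ j then 1 else 0) - (if k = i ∧ 2 ≤ j then 1 else 0)
        - (if j = i + 1 then 1 else 0) := by
    rw [Hcoef_uvec]; split_ifs <;> first | omega | norm_num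
  have hD : Hcoef n i 0 (uvec n k (j + k))
      = (if i = j + k then 1 else 0) - (if k = i then 1 else 0)
        - (if i = j then 1 else 0) := by
    rw [Hcoef_uvec]; split_ifs <;> first | omega | norm_num
  rw [hA, hB, hC, hD]
  unfold cartan
  split_ifs <;> first | omega | norm_num

set_option maxHeartbeats 4000000 in
lemma key_F (n i j k : ℕ) (hn : 2 ≤ n) (hi : 1 ≤ i) (hi' : i ≤ n - 1)
    (hj : 1 ≤ j) (hj' : j ≤ n - 1) (hk : 1 ≤ k) (hk' : k ≤ j) :
    Hcoef n i 0 (fShift n j k) = cartan i j := by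
  unfold fShift
  rw [Hcoef_sub0, Hcoef_sub0, Hcoef_add]
  have hA : Hcoef n i 0 (uvec n (k - 1) j)
      = (if i = j ∧ 2 ≤ k then 1 else 0) - (if k = i + 1 then 1 else 0)
        - (if j = i + k - 1 ∧ 2 ≤ k then 1 else 0) := by
    rw [Hcoef_uvec]; split_ifs <;> first | omega | norm_num
  have hB : Hcoef n i 0 (uvec n k j)
      = (if i = j ∧ k < j then 1 else 0) - (if k = i ∧ i < j then 1 else 0)
        - (if j = i + k then 1 else 0) := by
    rw [Hcoef_uvec]; split_ifs <;> first | omega | norm_num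
  have hC : Hcoef n i 0 (uvec n (k - 1) (j - 1))
      = (if j = i + 1 ∧ 2 ≤ k ∧ k ≤ i then 1 else 0)
        - (if k = i + 1 ∧ i + 2 ≤ j then 1 else 0)
        - (if j = i + k ∧ 2 ≤ k then 1 else 0) := by
    rw [Hcoef_uvec]; split_ifs <;> first | omega | norm_num
  have hD : Hcoef n i 0 (uvec n k (j + 1))
      = (if i = j + 1 then 1 else 0) - (if k = i then 1 else 0)
        - (if j + 1 = i + k then 1 else 0) := by
    rw [Hcoef_uvec]; split_ifs <;> first | omega | norm_num
  rw [hA, hB, hC, hD]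
  have hG1 : ((if i = j ∧ 2 ≤ k then (1:ℂ) else 0) - (if k = i + 1 then 1 else 0)
        - (if j = i + k - 1 ∧ 2 ≤ k then 1 else 0))
      - ((if j = i + 1 ∧ 2 ≤ k ∧ k ≤ i then 1 else 0)
        - (if k = i + 1 ∧ i + 2 ≤ j then 1 else 0)
        - (if j = i + k ∧ 2 ≤ k then 1 else 0))
      = (if i = j ∧ 2 ≤ k then 1 else 0) - (if j = i + 1 ∧ 2 ≤ k then 1 else 0)
        - (if j = i + k - 1 ∧ 2 ≤ k then 1 else 0)
        + (if j = i + k ∧ 2 ≤ k then 1 else 0) := by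
    split_ifs <;> first | omega | norm_num
  have hG2 : ((if i = j ∧ k < j then (1:ℂ) else 0) - (if k = i ∧ i < j then 1 else 0)
        - (if j = i + k then 1 else 0))
      - ((if i = j + 1 then 1 else 0) - (if k = i then 1 else 0)
        - (if j + 1 = i + k then 1 else 0))
      = (if i = j then 1 else 0) - (if j = i + k then 1 else 0)
        - (if i = j + 1 then 1 else 0) + (if j + 1 = i + k then 1 else 0) := by
    split_ifs <;> first | omega | norm_num
  have hG3 : ((if i = j ∧ 2 ≤ k then (1:ℂ) else 0) - (if j = i + 1 ∧ 2 ≤ k then 1 else 0)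
        - (if j = i + k - 1 ∧ 2 ≤ k then 1 else 0)
        + (if j = i + k ∧ 2 ≤ k then 1 else 0))
      + ((if i = j then 1 else 0) - (if j = i + k then 1 else 0)
        - (if i = j + 1 then 1 else 0) + (if j + 1 = i + k then 1 else 0))
      = cartan i j := by
    unfold cartan
    split_ifs <;> first | omega | norm_num
  linear_combination hG1 + hG2 + hG3

/-- `[H_i, E_j] = a_{ij} E_j` and `[H_i, F_j] = -a_{ij} F_j` for the classical
principal series shift-operator action of `sl(n)`. -/
theorem H_E_F_commutators (n i j : ℕ) (hn : 2 ≤ n)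
    (hi : 1 ≤ i) (hi' : i ≤ n - 1) (hj : 1 ≤ j) (hj' : j ≤ n - 1)
    (lam : ℕ → ℂ) (f : (ℕ × ℕ → ℂ) → ℂ) (u : ℕ × ℕ → ℂ) :
    Hop n i (lam i) (Eop n j f) u - Eop n j (Hop n i (lam i) f) u
        = cartan i j * Eop n j f u ∧
    Hop n i (lam i) (Fop n j (lam j) f) u - Fop n j (lam j) (Hop n i (lam i) f) u
        = - cartan i j * Fop n j (lam j) f u := by
  constructor
  · simp only [Hop, Eop]
    rw [Finset.mul_sum, Finset.mul_sum, ← Finset.sum_sub_distrib]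
    apply Finset.sum_congr rfl
    intro k hk
    simp only [Finset.mem_Icc] at hk
    rw [Hcoef_add, key_E n i j k hn hi hi' hj hj' hk.1 hk.2]
    ring
  · simp only [Hop, Fop]
    rw [Finset.mul_sum, Finset.mul_sum, ← Finset.sum_sub_distrib]
    apply Finset.sum_congr rfl
    intro k hk
    simp only [Finset.mem_Icc] at hk
    rw [Hcoef_add, key_F n i j k hn hi hi' hj hj' hk.1 hk.2]
    ring
end
end

section
/- For the classical principal series shift-operator action of sl(n) defined above, [E_i, F_{i'}] = δ_{i,i'} H_i as operators on functions of the variables u_{jk}. -/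
noncomputable section
open Finset

lemma mval_uvec (n p q r s : ℕ) :
    mval n (uvec n p q) r s = uvec n p q (r, s) := by
  simp only [mval, uvec, Prod.mk.injEq]
  split_ifs <;> first | rfl | (exfalso; omega)

lemma sum_uvec_col (n a b c p q : ℕ) :
    ∑ j ∈ Icc a b, mval n (uvec n p q) j c
      = if a ≤ p ∧ p ≤ b ∧ c = q ∧ 1 ≤ p ∧ p < q ∧ q ≤ n then 1 else 0 := by
  have h : ∀ j, mval n (uvec n p q) j c
      = if j = p then (if c = q ∧ 1 ≤ p ∧ p < q ∧ q ≤ n then (1 : ℂ) else 0) else 0 := by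
    intro j
    rw [mval_uvec]
    simp only [uvec, Prod.mk.injEq]
    split_ifs <;> first | rfl | (exfalso; omega)
  simp only [h]
  rw [Finset.sum_ite_eq' (Icc a b) p
    (fun _ => if c = q ∧ 1 ≤ p ∧ p < q ∧ q ≤ n then (1 : ℂ) else 0)]
  simp only [Finset.mem_Icc]
  split_ifs <;> first | rfl | (exfalso; omega)

lemma sum_uvec_row (n a b c p q : ℕ) :
    ∑ j ∈ Icc a b, mval n (uvec n p q) c j
      = if a ≤ q ∧ q ≤ b ∧ c = p ∧ 1 ≤ p ∧ p < q ∧ q ≤ n then 1 else 0 := by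
  have h : ∀ j, mval n (uvec n p q) c j
      = if j = q then (if c = p ∧ 1 ≤ p ∧ p < q ∧ q ≤ n then (1 : ℂ) else 0) else 0 := by
    intro j
    rw [mval_uvec]
    simp only [uvec, Prod.mk.injEq]
    split_ifs <;> first | rfl | (exfalso; omega)
  simp only [h]
  rw [Finset.sum_ite_eq' (Icc a b) q
    (fun _ => if c = p ∧ 1 ≤ p ∧ p < q ∧ q ≤ n then (1 : ℂ) else 0)]
  simp only [Finset.mem_Icc]
  split_ifs <;> first | rfl | (exfalso; omega)

lemma sum_uvec_diag (n i a b p q : ℕ) :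
    ∑ j ∈ Icc a b, mval n (uvec n p q) j (i + j)
      = if a ≤ p ∧ p ≤ b ∧ q = i + p ∧ 1 ≤ p ∧ p < q ∧ q ≤ n then 1 else 0 := by
  have h : ∀ j, mval n (uvec n p q) j (i + j)
      = if j = p then (if q = i + p ∧ 1 ≤ p ∧ p < q ∧ q ≤ n then (1 : ℂ) else 0) else 0 := by
    intro j
    rw [mval_uvec]
    simp only [uvec, Prod.mk.injEq]
    split_ifs <;> first | rfl | (exfalso; omega)
  simp only [h]
  rw [Finset.sum_ite_eq' (Icc a b) p
    (fun _ => if q = i + p ∧ 1 ≤ p ∧ p < q ∧ q ≤ n then (1 : ℂ) else 0)]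
  simp only [Finset.mem_Icc]
  split_ifs <;> first | rfl | (exfalso; omega)

set_option maxHeartbeats 1000000 in
lemma eShift_row (n i i' k : ℕ) (hi : 1 ≤ i) (hi' : i ≤ n - 1)
    (hk1 : 1 ≤ k) (hk2 : k ≤ n - i) (hi1 : 1 ≤ i') (hi2 : i' ≤ n - 1) :
    ∑ j ∈ Icc (i' + 1) n, mval n (eShift n i k) i' j
      = if k = i' ∧ i = 1 then 1 else 0 := by
  simp only [eShift, mval_add, mval_sub, Finset.sum_add_distrib, Finset.sum_sub_distrib,
    sum_uvec_row]
  split_ifs <;> first | (exfalso; omega) | norm_num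

set_option maxHeartbeats 4000000 in
lemma eShift_col (n i i' k l : ℕ) (hi : 1 ≤ i) (hi' : i ≤ n - 1)
    (hk1 : 1 ≤ k) (hk2 : k ≤ n - i)
    (hi1 : 1 ≤ i') (hi2 : i' ≤ n - 1) (hl1 : 1 ≤ l) (hl2 : l ≤ i') :
    ∑ j ∈ Icc l i', mval n (eShift n i k) j i'
      = (if i + k = i' ∧ k = l then 1 else 0)
        - (if i + k = i' + 1 ∧ k = l then 1 else 0)
        + (if k = i' ∧ i = 1 then 1 else 0) := by
  simp only [eShift, mval_add, mval_sub, Finset.sum_add_distrib, Finset.sum_sub_distrib,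
    sum_uvec_col]
  split_ifs <;> first | (exfalso; omega) | norm_num

lemma eShift_delta (n i i' k l : ℕ) (hi : 1 ≤ i) (hi' : i ≤ n - 1)
    (hk1 : 1 ≤ k) (hk2 : k ≤ n - i)
    (hi1 : 1 ≤ i') (hi2 : i' ≤ n - 1) (hl1 : 1 ≤ l) (hl2 : l ≤ i') :
    (∑ j ∈ Icc l i', mval n (eShift n i k) j i')
      - ∑ j ∈ Icc (i' + 1) n, mval n (eShift n i k) i' j
      = (if i + k = i' ∧ k = l then 1 else 0)
        - (if i + k = i' + 1 ∧ k = l then 1 else 0) := by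
  rw [eShift_row n i i' k hi hi' hk1 hk2 hi1 hi2,
    eShift_col n i i' k l hi hi' hk1 hk2 hi1 hi2 hl1 hl2]
  ring

set_option maxHeartbeats 1000000 in
lemma fShift_delta (n i i' k l : ℕ) (hi : 1 ≤ i) (hi' : i ≤ n - 1)
    (hk1 : 1 ≤ k) (hk2 : k ≤ n - i)
    (hi1 : 1 ≤ i') (hi2 : i' ≤ n - 1) (hl1 : 1 ≤ l) (hl2 : l ≤ i') :
    ∑ j ∈ Icc k (n - i), mval n (fShift n i' l) j (i + j)
      = (if i + k = i' ∧ k = l then 1 else 0)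
        - (if i + k = i' + 1 ∧ k = l then 1 else 0) := by
  simp only [fShift, mval_add, mval_sub, Finset.sum_add_distrib, Finset.sum_sub_distrib,
    sum_uvec_diag]
  split_ifs <;> first | (exfalso; omega) | norm_num

lemma Fcoef_shift (n i i' k l : ℕ) (lam : ℂ) (u : ℕ × ℕ → ℂ) (hi : 1 ≤ i) (hi' : i ≤ n - 1)
    (hk1 : 1 ≤ k) (hk2 : k ≤ n - i)
    (hi1 : 1 ≤ i') (hi2 : i' ≤ n - 1) (hl1 : 1 ≤ l) (hl2 : l ≤ i') :
    Fcoef n i' l lam (u + eShift n i k)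
      = Fcoef n i' l lam u
        + ((if i + k = i' ∧ k = l then 1 else 0)
            - (if i + k = i' + 1 ∧ k = l then 1 else 0)) := by
  have h := eShift_delta n i i' k l hi hi' hk1 hk2 hi1 hi2 hl1 hl2
  simp only [Fcoef, mval_add, Finset.sum_add_distrib]
  rw [← h]
  ring

lemma Ecoef_shift (n i i' k l : ℕ) (u : ℕ × ℕ → ℂ) (hi : 1 ≤ i) (hi' : i ≤ n - 1)
    (hk1 : 1 ≤ k) (hk2 : k ≤ n - i)
    (hi1 : 1 ≤ i') (hi2 : i' ≤ n - 1) (hl1 : 1 ≤ l) (hl2 : l ≤ i') :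
    Ecoef n i k (u + fShift n i' l)
      = Ecoef n i k u
        + ((if i + k = i' ∧ k = l then 1 else 0)
            - (if i + k = i' + 1 ∧ k = l then 1 else 0)) := by
  have h := fShift_delta n i i' k l hi hi' hk1 hk2 hi1 hi2 hl1 hl2
  simp only [Ecoef, mval_add, Finset.sum_add_distrib]
  rw [← h]
  ring

lemma uvec_zero_left (n q : ℕ) : uvec n 0 q = 0 := by
  funext x
  simp [uvec]

lemma eShift_add_fShift_one (n i : ℕ) : eShift n i 1 + fShift n i 1 = 0 := by
  have h1 : (1 : ℕ) - 1 = 0 := rfl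
  have h2 : i + 1 - 1 = i := by omega
  simp only [eShift, fShift, h1, h2, uvec_zero_left]
  abel

lemma shift_eq (n i a : ℕ) :
    eShift n i a + fShift n (i + a) a = eShift n i (a + 1) + fShift n (i + a) (a + 1) := by
  have h1 : a + 1 - 1 = a := by omega
  have h3 : i + (a + 1) = i + a + 1 := by omega
  have h5 : i + a + 1 - 1 = i + a := by omega
  simp only [eShift, fShift, h3, h1, h5]
  abel

lemma coef_eq (n i a : ℕ) (lam : ℂ) (u : ℕ × ℕ → ℂ) (ha : 1 ≤ a) (han : a ≤ n - i) :
    Ecoef n i a u - Fcoef n (i + a) a lam u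
      = Ecoef n i (a + 1) u - Fcoef n (i + a) (a + 1) lam u := by
  have hE : Ecoef n i a u = mval n u a (i + a) + Ecoef n i (a + 1) u := by
    simp only [Ecoef]
    rw [Finset.Icc_eq_cons_Ioc han, Finset.sum_cons, ← Finset.Icc_add_one_left_eq_Ioc]
    ring
  have hF : Fcoef n (i + a) a lam u = mval n u a (i + a) + Fcoef n (i + a) (a + 1) lam u := by
    simp only [Fcoef]
    rw [Finset.Icc_eq_cons_Ioc (by omega : a ≤ i + a), Finset.sum_cons, ← Finset.Icc_add_one_left_eq_Ioc]
    ring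
  rw [hE, hF]
  ring

lemma Fcoef_sub_Ecoef (n i : ℕ) (lam : ℂ) (u : ℕ × ℕ → ℂ) (hi : 1 ≤ i) :
    Fcoef n i 1 lam u - Ecoef n i 1 u = Hcoef n i lam u := by
  obtain ⟨m, rfl⟩ : ∃ m, i = m + 1 := ⟨i - 1, by omega⟩
  simp only [Fcoef, Ecoef, Hcoef, Nat.add_sub_cancel]
  rw [Finset.sum_Icc_succ_top (by omega : 1 ≤ m + 1)]
  have h : mval n u (m + 1) (m + 1) = 0 := by simp [mval]
  rw [h]
  ring

/-- The single surviving term of the commutator double sum. -/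
def commTerm (n i i' : ℕ) (lam : ℂ) (f : (ℕ × ℕ → ℂ) → ℂ) (u : ℕ × ℕ → ℂ) (k : ℕ) : ℂ :=
  ((if i + k = i' then (1 : ℂ) else 0) - if i + k = i' + 1 then 1 else 0)
    * ((Ecoef n i k u - Fcoef n i' k lam u) * f (u + eShift n i k + fShift n i' k))

/-- `[E_i, F_{i'}] = δ_{i,i'} H_i` for the classical principal series shift-operator
action of `sl(n)`. -/
theorem E_F_commutator (n i i' : ℕ) (hn : 2 ≤ n)
    (hi : 1 ≤ i) (hi' : i ≤ n - 1) (hi2 : 1 ≤ i') (hi2' : i' ≤ n - 1)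
    (lam : ℕ → ℂ) (f : (ℕ × ℕ → ℂ) → ℂ) (u : ℕ × ℕ → ℂ) :
    Eop n i (Fop n i' (lam i') f) u - Fop n i' (lam i') (Eop n i f) u
      = if i = i' then Hop n i (lam i) f u else 0 := by
  have key : ∀ k ∈ Icc 1 (n - i), ∀ l ∈ Icc 1 i',
      Ecoef n i k u * (Fcoef n i' l (lam i') (u + eShift n i k)
          * f (u + eShift n i k + fShift n i' l))
        - Fcoef n i' l (lam i') u * (Ecoef n i k (u + fShift n i' l)
          * f (u + fShift n i' l + eShift n i k))
      = if l = k then commTerm n i i' (lam i') f u k else 0 := by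
    intro k hk l hl
    rw [Finset.mem_Icc] at hk hl
    rw [Fcoef_shift n i i' k l (lam i') u hi hi' hk.1 hk.2 hi2 hi2' hl.1 hl.2,
      Ecoef_shift n i i' k l u hi hi' hk.1 hk.2 hi2 hi2' hl.1 hl.2,
      add_right_comm u (fShift n i' l) (eShift n i k)]
    simp only [commTerm]
    by_cases h : l = k
    · subst h
      simp only [eq_self_iff_true, and_true, if_true]
      ring
    · rw [if_neg h, if_neg (fun hc => h hc.2.symm), if_neg (fun hc => h hc.2.symm)]
      ring
  have inner : ∀ k ∈ Icc 1 (n - i),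
      ((∑ l ∈ Icc 1 i', Ecoef n i k u * (Fcoef n i' l (lam i') (u + eShift n i k)
          * f (u + eShift n i k + fShift n i' l)))
        - ∑ l ∈ Icc 1 i', Fcoef n i' l (lam i') u * (Ecoef n i k (u + fShift n i' l)
          * f (u + fShift n i' l + eShift n i k)))
      = if k ∈ Icc 1 i' then commTerm n i i' (lam i') f u k else 0 := by
    intro k hk
    rw [← Finset.sum_sub_distrib, Finset.sum_congr rfl (fun l hl => key k hk l hl)]
    exact Finset.sum_ite_eq' (Icc 1 i') k (fun _ => commTerm n i i' (lam i') f u k)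
  have h1 : Eop n i (Fop n i' (lam i') f) u
      = ∑ k ∈ Icc 1 (n - i), ∑ l ∈ Icc 1 i',
          Ecoef n i k u * (Fcoef n i' l (lam i') (u + eShift n i k)
            * f (u + eShift n i k + fShift n i' l)) := by
    simp only [Eop, Fop, Finset.mul_sum]
  have h2 : Fop n i' (lam i') (Eop n i f) u
      = ∑ k ∈ Icc 1 (n - i), ∑ l ∈ Icc 1 i',
          Fcoef n i' l (lam i') u * (Ecoef n i k (u + fShift n i' l)
            * f (u + fShift n i' l + eShift n i k)) := by
    simp only [Fop, Eop, Finset.mul_sum]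
    exact Finset.sum_comm
  rw [h1, h2, ← Finset.sum_sub_distrib]
  refine (Finset.sum_congr rfl inner).trans ?_
  rcases Nat.lt_trichotomy i i' with hlt | heq | hgt
  · -- i < i' : the two surviving terms cancel
    rw [if_neg (by omega)]
    obtain ⟨a, ha1, rfl⟩ : ∃ a, 1 ≤ a ∧ i' = i + a := ⟨i' - i, by omega, by omega⟩
    have hsub : ({a, a + 1} : Finset ℕ) ⊆ Icc 1 (n - i) := by
      intro x hx
      simp only [Finset.mem_insert, Finset.mem_singleton] at hx
      rw [Finset.mem_Icc]
      omega
    have hzero : ∀ x ∈ Icc 1 (n - i), x ∉ ({a, a + 1} : Finset ℕ) →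
        (if x ∈ Icc 1 (i + a) then commTerm n i (i + a) (lam (i + a)) f u x else 0) = 0 := by
      intro x hx hx2
      rw [Finset.mem_Icc] at hx
      simp only [Finset.mem_insert, Finset.mem_singleton, not_or] at hx2
      split_ifs
      · simp only [commTerm]
        rw [if_neg (show ¬(i + x = i + a) by omega),
          if_neg (show ¬(i + x = i + a + 1) by omega)]
        ring
      · rfl
    rw [← Finset.sum_subset hsub hzero,
      Finset.sum_insert (by simp), Finset.sum_singleton,
      if_pos (Finset.mem_Icc.mpr ⟨ha1, by omega⟩),
      if_pos (Finset.mem_Icc.mpr ⟨by omega, by omega⟩)]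
    simp only [commTerm]
    rw [if_true,
      if_neg (show ¬(i + a = i + a + 1) by omega),
      if_neg (show ¬(i + (a + 1) = i + a) by omega),
      if_pos (show i + (a + 1) = i + a + 1 by omega),
      add_assoc u (eShift n i a), add_assoc u (eShift n i (a + 1)),
      shift_eq n i a, coef_eq n i a (lam (i + a)) u ha1 (by omega)]
    ring
  · -- i = i' : the single surviving term gives H
    subst heq
    rw [if_pos rfl]
    rw [Finset.sum_eq_single_of_mem 1 (Finset.mem_Icc.mpr ⟨le_refl 1, by omega⟩) ?_]
    · rw [if_pos (Finset.mem_Icc.mpr ⟨le_refl 1, hi⟩)]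
      simp only [commTerm]
      rw [if_neg (show ¬(i + 1 = i) by omega), if_true,
        add_assoc, eShift_add_fShift_one, add_zero]
      simp only [Hop]
      rw [← Fcoef_sub_Ecoef n i (lam i) u hi]
      ring
    · intro b hb hb1
      rw [Finset.mem_Icc] at hb
      split_ifs
      · simp only [commTerm]
        rw [if_neg (show ¬(i + b = i) by omega), if_neg (show ¬(i + b = i + 1) by omega)]
        ring
      · rfl
  · -- i > i' : everything vanishes
    rw [if_neg (by omega)]
    refine Finset.sum_eq_zero fun k hk => ?_
    rw [Finset.mem_Icc] at hk
    split_ifs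
    · simp only [commTerm]
      rw [if_neg (show ¬(i + k = i') by omega), if_neg (show ¬(i + k = i' + 1) by omega)]
      ring
    · rfl
end
end
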